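/- arXiv:math/0210292 — 4 statements merged into one kernel-verified Lean document; each statement's English description precedes it below -/
import Mathlib

section
/- Let w ∈ ℂⁿ and let D be a bounded domain with B(w, r) ⊆ D ⊆ B(w, R), where 0 < r < R. Let Y ∈ ℂⁿ with |Y| = 1 and let s be a real number with 0 < s ≤ r²/(16R). If f_s is a Carathéodory extremal function for the points w + sY and w on D, then Re ⟨∇f_s(w), Y⟩ ≥ 1/(4R). -/
open Set Metric

/-- `f` is a Carathéodory extremal function for the points `z` and `w` on `D`:
a holomorphic map of `D` into the unit disc with `f w = 0`, `f z` real, and `Re (h z)`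
maximal among all competitors `h`. -/
def IsCaratheodoryExtremal {n : ℕ} (D : Set (EuclideanSpace ℂ (Fin n)))
    (z w : EuclideanSpace ℂ (Fin n)) (f : EuclideanSpace ℂ (Fin n) → ℂ) : Prop :=
  DifferentiableOn ℂ f D ∧ MapsTo f D (ball (0 : ℂ) 1) ∧ f w = 0 ∧ (f z).im = 0 ∧
    ∀ h : EuclideanSpace ℂ (Fin n) → ℂ, DifferentiableOn ℂ h D →
      MapsTo h D (ball (0 : ℂ) 1) → h w = 0 → (h z).re ≤ (f z).re

/-- If `B(w,r) ⊆ D ⊆ B(w,R)`, `|Y| = 1`, `0 < s ≤ r²/(16R)`, and `f`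
is a Carathéodory extremal function for `w + sY` and `w` on `D`, then
`Re ⟨∇f(w), Y⟩ ≥ 1/(4R)`.  (For holomorphic `f` the pairing `⟨∇f(w), Y⟩` is the
complex Fréchet derivative of `f` at `w` applied to `Y`.) -/
theorem stmt1 {n : ℕ} (w : EuclideanSpace ℂ (Fin n)) (r R : ℝ) (hr : 0 < r) (hrR : r < R)
    (D : Set (EuclideanSpace ℂ (Fin n))) (hDopen : IsOpen D) (hDconn : IsConnected D)
    (hrD : ball w r ⊆ D) (hDR : D ⊆ ball w R)
    (Y : EuclideanSpace ℂ (Fin n)) (hY : ‖Y‖ = 1)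
    (s : ℝ) (hs : 0 < s) (hs' : s ≤ r ^ 2 / (16 * R))
    (f : EuclideanSpace ℂ (Fin n) → ℂ)
    (hf : IsCaratheodoryExtremal D (w + (s : ℂ) • Y) w f) :
    1 / (4 * R) ≤ (fderiv ℂ f w Y).re := by
  have hR : 0 < R := hr.trans hrR
  obtain ⟨hfd, hfm, hfw, hfim, hext⟩ := hf
  set z₀ := w + (s : ℂ) • Y with hz₀def
  have hsr : s < r := by
    have : r ^ 2 / (16 * R) < r := by
      rw [div_lt_iff₀ (by positivity)]
      nlinarith
    linarith
  have hz₀r : z₀ ∈ ball w r := by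
    simp only [z₀, mem_ball, dist_eq_norm, add_sub_cancel_left, norm_smul, hY,
      Complex.norm_real, mul_one]
    rwa [Real.norm_eq_abs, abs_of_pos hs]
  have hz₀D : z₀ ∈ D := hrD hz₀r
  -- Step 1: competitor gives a lower bound on `(f z₀).re`.
  have hlow : s / (2 * R) ≤ (f z₀).re := by
    set h : EuclideanSpace ℂ (Fin n) → ℂ :=
      fun z => ((2 * R : ℝ) : ℂ)⁻¹ * inner ℂ Y (z - w) with hhdef
    have hhd : DifferentiableOn ℂ h D := by
      apply DifferentiableOn.const_mul
      have : Differentiable ℂ fun z : EuclideanSpace ℂ (Fin n) =>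
          (innerSL ℂ Y) (z - w) :=
        (innerSL ℂ Y).differentiable.comp (differentiable_id.sub_const w)
      exact this.differentiableOn
    have hhm : MapsTo h D (ball (0 : ℂ) 1) := by
      intro z hz
      have hz' : ‖z - w‖ < R := by
        have := hDR hz
        rwa [mem_ball, dist_eq_norm] at this
      have h1 : ‖(inner ℂ Y (z - w) : ℂ)‖ ≤ ‖z - w‖ := by
        calc ‖(inner ℂ Y (z - w) : ℂ)‖ ≤ ‖Y‖ * ‖z - w‖ := norm_inner_le_norm Y (z - w)
        _ = ‖z - w‖ := by rw [hY, one_mul]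
      rw [mem_ball, dist_zero_right]
      have hnorm : ‖h z‖ = (2 * R)⁻¹ * ‖(inner ℂ Y (z - w) : ℂ)‖ := by
        simp only [hhdef, norm_mul, norm_inv, Complex.norm_real, Real.norm_eq_abs,
          abs_mul, abs_of_pos hR, abs_of_pos (show (0:ℝ) < 2 by norm_num)]
      rw [hnorm]
      calc (2 * R)⁻¹ * ‖(inner ℂ Y (z - w) : ℂ)‖ ≤ (2 * R)⁻¹ * ‖z - w‖ := by
            exact mul_le_mul_of_nonneg_left h1 (by positivity)
        _ < (2 * R)⁻¹ * (2 * R) := by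
            apply mul_lt_mul_of_pos_left _ (by positivity)
            linarith
        _ = 1 := by field_simp
    have hhw : h w = 0 := by simp [hhdef]
    have := hext h hhd hhm hhw
    have hval : h z₀ = ((s / (2 * R) : ℝ) : ℂ) := by
      have : (inner ℂ Y ((s : ℂ) • Y) : ℂ) = (s : ℂ) := by
        rw [inner_smul_right, inner_self_eq_norm_sq_to_K, hY]
        norm_num
      simp only [hhdef, hz₀def, add_sub_cancel_left, this]
      push_cast
      rw [div_eq_inv_mul]
    rw [hval] at this
    rwa [Complex.ofReal_re] at this
  -- Step 2: the one-variable slice.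
  set g : ℂ → ℂ := fun lam => f (w + lam • Y) with hgdef
  have hmapball : ∀ lam ∈ ball (0 : ℂ) r, w + lam • Y ∈ D := by
    intro lam hlam
    apply hrD
    simp only [mem_ball, dist_eq_norm, add_sub_cancel_left, norm_smul, hY, mul_one]
    simpa [dist_eq_norm] using hlam
  have hgd : DifferentiableOn ℂ g (ball (0 : ℂ) r) := by
    intro lam hlam
    have h1 : DifferentiableAt ℂ f (w + lam • Y) :=
      hfd.differentiableAt (hDopen.mem_nhds (hmapball lam hlam))
    have h2 : DifferentiableAt ℂ (fun lam : ℂ => w + lam • Y) lam :=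
      (differentiableAt_id.smul_const Y).const_add w
    exact (h1.comp lam h2).differentiableWithinAt
  have hg0 : g 0 = 0 := by simp [hgdef, hfw]
  have hgm : MapsTo g (ball (0 : ℂ) r) (ball (g 0) 1) := by
    rw [hg0]
    intro lam hlam
    exact hfm (hmapball lam hlam)
  set k : ℂ → ℂ := dslope g 0 with hkdef
  have hkb : ∀ lam ∈ ball (0 : ℂ) r, ‖k lam‖ ≤ 1 / r := fun lam hlam =>
    Complex.norm_dslope_le_div_of_mapsTo_ball hgd (hgm.mono_right ball_subset_closedBall) hlam
  have hkd : DifferentiableOn ℂ k (ball (0 : ℂ) r) :=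
    (Complex.differentiableOn_dslope (ball_mem_nhds _ hr)).mpr hgd
  have h0ball : (0 : ℂ) ∈ ball (0 : ℂ) r := mem_ball_self hr
  set p : ℂ → ℂ := fun lam => k lam - k 0 with hpdef
  have hpd : DifferentiableOn ℂ p (ball (0 : ℂ) r) := hkd.sub_const _
  have hp0 : p 0 = 0 := by simp [hpdef]
  have hpm : MapsTo p (ball (0 : ℂ) r) (ball (p 0) (3 / r)) := by
    rw [hp0]
    intro lam hlam
    simp only [mem_ball, dist_zero_right, hpdef]
    calc ‖k lam - k 0‖ ≤ ‖k lam‖ + ‖k 0‖ := norm_sub_le _ _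
      _ ≤ 1 / r + 1 / r := add_le_add (hkb lam hlam) (hkb 0 h0ball)
      _ < 3 / r := by
          rw [← add_div, div_lt_div_iff₀ (by positivity) (by positivity)]
          nlinarith
  have hsball : (s : ℂ) ∈ ball (0 : ℂ) r := by
    simp only [mem_ball, dist_zero_right, Complex.norm_real, Real.norm_eq_abs]
    rwa [abs_of_pos hs]
  -- Schwarz estimate on `p` at `s`.
  have hps : ‖p (s : ℂ)‖ ≤ 3 / r / r * s := by
    have := Complex.norm_dslope_le_div_of_mapsTo_ball hpd (hpm.mono_right ball_subset_closedBall) hsball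
    have hsne : (s : ℂ) ≠ 0 := by
      simpa using hs.ne'
    rw [dslope_of_ne _ hsne, slope_def_field, hp0, sub_zero, sub_zero] at this
    have hnorm : ‖p (s : ℂ) / (s : ℂ)‖ = ‖p (s : ℂ)‖ / s := by
      rw [norm_div, Complex.norm_real, Real.norm_eq_abs, abs_of_pos hs]
    rw [hnorm, div_le_iff₀ hs] at this
    linarith
  -- `g s = s * k s`, so `(k s).re ≥ 1/(2R)`.
  have hks : (k (s : ℂ)).re = (f z₀).re / s := by
    have hsne : (s : ℂ) ≠ 0 := by simpa using hs.ne'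
    have : k (s : ℂ) = g (s : ℂ) / (s : ℂ) := by
      rw [hkdef, dslope_of_ne _ hsne, slope_def_field, hg0, sub_zero, sub_zero]
    rw [this]
    have hgz : g (s : ℂ) = f z₀ := by rw [hgdef]
    rw [hgz, Complex.div_re]
    simp [Complex.normSq_ofReal]
    have hsne0 : s ≠ 0 := hs.ne'
    field_simp
  have hksre : 1 / (2 * R) ≤ (k (s : ℂ)).re := by
    rw [hks, le_div_iff₀ hs, one_div, inv_mul_eq_div, div_le_iff₀ (by positivity : (0:ℝ) < 2 * R)]
    rw [div_le_iff₀ (by positivity : (0:ℝ) < 2 * R)] at hlow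
    linarith
  -- conclude for `(k 0).re`.
  have hk0re : 1 / (2 * R) - 3 / r / r * s ≤ (k 0).re := by
    have h1 : (k (s : ℂ)).re - (k 0).re ≤ ‖p (s : ℂ)‖ := by
      calc (k (s : ℂ)).re - (k 0).re = (p (s : ℂ)).re := by simp [hpdef]
        _ ≤ |(p (s : ℂ)).re| := le_abs_self _
        _ ≤ ‖p (s : ℂ)‖ := Complex.abs_re_le_norm _
    linarith
  -- identify `k 0` with `fderiv ℂ f w Y`.
  have hk0 : k 0 = fderiv ℂ f w Y := by
    rw [hkdef, dslope_same]
    have hfw' : HasFDerivAt f (fderiv ℂ f w) w :=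
      (hfd.differentiableAt (hDopen.mem_nhds (hrD (mem_ball_self hr)))).hasFDerivAt
    have hA : HasDerivAt (fun lam : ℂ => w + lam • Y) Y 0 := by
      have : HasDerivAt (fun lam : ℂ => lam • Y) Y 0 := by
        simpa using (hasDerivAt_id (0 : ℂ)).smul_const Y
      simpa using this.const_add w
    have hfw'' : HasFDerivAt f (fderiv ℂ f w) (w + (0:ℂ) • Y) := by simpa using hfw'
    have : HasDerivAt g (fderiv ℂ f w Y) 0 := by
      have := hfw''.comp_hasDerivAt 0 hA
      exact this
    exact this.deriv
  rw [← hk0]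
  -- final arithmetic: `3 s / r² ≤ 3/(16R) ≤ 1/(4R)`.
  have harith : 3 / r / r * s ≤ 1 / (4 * R) := by
    have h1 : 3 / r / r * s ≤ 3 / r / r * (r ^ 2 / (16 * R)) := by
      apply mul_le_mul_of_nonneg_left hs' (by positivity)
    have h2 : 3 / r / r * (r ^ 2 / (16 * R)) = 3 / (16 * R) := by
      field_simp
    rw [h2] at h1
    calc 3 / r / r * s ≤ 3 / (16 * R) := h1
      _ ≤ 1 / (4 * R) := by
          rw [div_le_div_iff₀ (by positivity) (by positivity)]
          nlinarith
  calc 1 / (4 * R) = 1 / (2 * R) - 1 / (4 * R) := by ring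
    _ ≤ 1 / (2 * R) - 3 / r / r * s := by linarith
    _ ≤ (k 0).re := hk0re
end

section
/- Let R > 2r > 2s > 0, let K be a connected compact subset of ℂⁿ containing 0, and let D be a domain in ℂⁿ such that B(0, 2r) ⊆ D ⊆ B(0, R) and such that the closed 3s-neighborhood of K is contained in D. Then there exists a positive constant C = C(K, R, s) such that ‖X‖_K ≤ C · ‖X‖_{B(0, r)} for every holomorphic vector field X on D generated by a one-parameter group action on D. -/
open Set Metric

set_option linter.unusedSectionVars false
set_option linter.unusedTactic false
set_option maxHeartbeats 2000000

section holomorphicLemmas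

open Complex

variable {E F : Type*} [NormedAddCommGroup E] [NormedSpace ℂ E]
  [NormedAddCommGroup F] [NormedSpace ℂ F] [CompleteSpace F]



lemma coeff_le {f : ℂ → F} {ρ M : ℝ} (hρ : 0 < ρ)
    (hc : ContinuousOn f (sphere (0:ℂ) ρ))
    (hM : ∀ z ∈ sphere (0:ℂ) ρ, ‖f z‖ ≤ M) (n : ℕ) :
    ‖cauchyPowerSeries f 0 ρ n‖ ≤ M * (ρ⁻¹) ^ n := by
  have hM0 : 0 ≤ M := le_trans (norm_nonneg _) (hM ρ (by simp [abs_of_pos hρ]))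
  have hint : ∫ θ : ℝ in (0)..2 * Real.pi, ‖f (circleMap 0 ρ θ)‖ ≤ M * (2 * Real.pi) := by
    have h1 : ∀ θ ∈ Set.Icc (0:ℝ) (2 * Real.pi), ‖f (circleMap 0 ρ θ)‖ ≤ M := fun θ _ =>
      hM _ (circleMap_mem_sphere 0 hρ.le θ)
    have hcont : Continuous fun θ : ℝ => ‖f (circleMap 0 ρ θ)‖ :=
      (hc.comp_continuous (continuous_circleMap 0 ρ)
        (fun θ => circleMap_mem_sphere 0 hρ.le θ)).norm
    calc ∫ θ : ℝ in (0)..2 * Real.pi, ‖f (circleMap 0 ρ θ)‖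
        ≤ ∫ _ : ℝ in (0)..2 * Real.pi, M := by
          apply intervalIntegral.integral_mono_on Real.two_pi_pos.le
            (hcont.intervalIntegrable _ _) intervalIntegrable_const
          exact h1
      _ = M * (2 * Real.pi) := by simp [mul_comm]
  refine (norm_cauchyPowerSeries_le f 0 ρ n).trans ?_
  rw [abs_of_pos hρ]
  have h2 : (2 * Real.pi)⁻¹ * ∫ θ : ℝ in (0)..2 * Real.pi, ‖f (circleMap 0 ρ θ)‖ ≤ M := by
    rw [inv_mul_le_iff₀ Real.two_pi_pos]
    linarith [hint]
  exact mul_le_mul_of_nonneg_right h2 (pow_nonneg (inv_nonneg.2 hρ.le) n)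

lemma deriv_le {f : ℂ → F} {ρ M : ℝ} (hρ : 0 < ρ)
    (hd : DifferentiableOn ℂ f (closedBall 0 ρ))
    (hM : ∀ z ∈ closedBall (0:ℂ) ρ, ‖f z‖ ≤ M) {v : F} (hv : HasDerivAt f v 0) :
    ‖v‖ ≤ M / ρ := by
  lift ρ to NNReal using hρ.le with ρ' hρ'
  have hρ0 : 0 < ρ' := by exact_mod_cast hρ
  have hps := hd.hasFPowerSeriesOnBall hρ0
  have hv2 := hps.hasFPowerSeriesAt.hasDerivAt
  have hveq : v = cauchyPowerSeries f 0 ρ' 1 fun _ => 1 := hv.unique hv2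
  rw [hveq]
  calc ‖cauchyPowerSeries f 0 ρ' 1 fun _ => 1‖
      ≤ ‖cauchyPowerSeries f 0 ρ' 1‖ * ∏ _i : Fin 1, ‖(1:ℂ)‖ :=
        (cauchyPowerSeries f 0 ρ' 1).le_opNorm _
    _ = ‖cauchyPowerSeries f 0 ρ' 1‖ := by simp
    _ ≤ M * (((ρ' : ℝ))⁻¹) ^ 1 := by
        apply coeff_le hρ (hd.continuousOn.mono sphere_subset_closedBall)
          (fun z hz => hM z (sphere_subset_closedBall hz))
    _ = M / ρ' := by rw [pow_one, div_eq_mul_inv]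


lemma propagate {f : E → F} {U : Set E} {p : E} {s B ε : ℝ}
    (hs : 0 < s) (hf : DifferentiableOn ℂ f U)
    (hsub : closedBall p (s/2) ⊆ U)
    (hB : 0 < B) (hε : 0 ≤ ε) (hεB : ε ≤ 4 * B)
    (hbig : ∀ z ∈ closedBall p (s/2), ‖f z‖ ≤ B)
    (hsmall : ∀ z ∈ closedBall p (s/16), ‖f z‖ ≤ ε)
    {x : E} (hx : x ∈ closedBall p (s/12)) :
    ‖f x‖ ≤ 2 * Real.sqrt (ε * B) := by
  have hεB' : 0 ≤ ε * B := mul_nonneg hε hB.le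
  have key : ε ≤ 2 * Real.sqrt (ε * B) := by
    have h5 : Real.sqrt (ε * B) * Real.sqrt (ε * B) = ε * B := Real.mul_self_sqrt hεB'
    nlinarith [Real.sqrt_nonneg (ε * B), sq_nonneg (2 * Real.sqrt (ε * B) - ε)]
  rcases eq_or_ne x p with rfl | hxp
  · exact (hsmall x (by simp [hs.le, mem_closedBall, dist_self]; positivity)).trans key
  · set d : ℝ := ‖x - p‖ with hd
    have hd0 : 0 < d := by simpa [hd] using sub_ne_zero.2 hxp
    have hdle : d ≤ s/12 := by
      rw [hd, ← dist_eq_norm]; exact mem_closedBall.1 hx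
    set u : E := d⁻¹ • (x - p) with hu
    have hnu : ‖u‖ = 1 := by
      rw [hu, norm_smul, norm_inv, Real.norm_eq_abs, abs_of_pos hd0, ← hd,
        inv_mul_cancel₀ hd0.ne']
    set l : ℂ → E := fun w => p + w • u with hl
    have hmaps : ∀ ρ : ℝ, ∀ w : ℂ, w ∈ closedBall (0:ℂ) ρ → l w ∈ closedBall p ρ := by
      intro ρ w hw
      simp only [hl, mem_closedBall, dist_eq_norm, add_sub_cancel_left, norm_smul, hnu, mul_one]
      simpa [dist_eq_norm] using hw
    have hld : Differentiable ℂ l := by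
      apply Differentiable.const_add
      exact (differentiable_id).smul_const u
    set g : ℂ → F := fun w => f (l w) with hg
    have hgd : ∀ ρ : ℝ, 0 < ρ → ρ ≤ s/2 → DifferentiableOn ℂ g (closedBall 0 ρ) := by
      intro ρ _ hρs
      apply hf.comp hld.differentiableOn
      intro w hw
      exact hsub ((closedBall_subset_closedBall hρs) (hmaps ρ w hw))
    -- power series at the two radii
    have h2 : (0:ℝ) < s/2 := by linarith
    have h16 : (0:ℝ) < s/16 := by linarith
    set ρ₂ : NNReal := ⟨s/2, h2.le⟩ with hρ₂
    set ρ₁ : NNReal := ⟨s/16, h16.le⟩ with hρ₁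
    have hps₂ : HasFPowerSeriesOnBall g (cauchyPowerSeries g 0 (s/2)) 0 ρ₂ := by
      have := (hgd (s/2) h2 le_rfl).hasFPowerSeriesOnBall (R := ρ₂) (by exact_mod_cast h2)
      exact this
    have hps₁ : HasFPowerSeriesOnBall g (cauchyPowerSeries g 0 (s/16)) 0 ρ₁ := by
      have := (hgd (s/16) h16 (by linarith)).hasFPowerSeriesOnBall (R := ρ₁) (by exact_mod_cast h16)
      exact this
    have huniq : cauchyPowerSeries g 0 (s/2) = cauchyPowerSeries g 0 (s/16) :=
      hps₂.hasFPowerSeriesAt.eq_formalMultilinearSeries hps₁.hasFPowerSeriesAt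
    -- coefficient bounds
    have hcoefB : ∀ m : ℕ, ‖cauchyPowerSeries g 0 (s/2) m‖ ≤ B * ((s/2)⁻¹) ^ m := by
      intro m
      apply coeff_le h2 (((hgd (s/2) h2 le_rfl).continuousOn).mono sphere_subset_closedBall)
      intro z hz
      exact hbig _ (hmaps (s/2) z (sphere_subset_closedBall hz))
    have hcoefε : ∀ m : ℕ, ‖cauchyPowerSeries g 0 (s/2) m‖ ≤ ε * ((s/16)⁻¹) ^ m := by
      intro m
      rw [huniq]
      apply coeff_le h16 (((hgd (s/16) h16 (by linarith)).continuousOn).mono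
        sphere_subset_closedBall)
      intro z hz
      exact hsmall _ (hmaps (s/16) z (sphere_subset_closedBall hz))
    -- evaluate the series at (d : ℂ)
    have hdball : (d : ℂ) ∈ Metric.eball (0:ℂ) ρ₂ := by
      rw [Metric.emetric_ball_nnreal]
      simp only [mem_ball, dist_zero_right, Complex.norm_real, Real.norm_eq_abs,
        abs_of_pos hd0]
      show d < s/2
      linarith
    have hsum := hps₂.hasSum hdball
    have hgd' : g (0 + (d:ℂ)) = f x := by
      have : ((d : ℂ)) • u = d • u := by
        rw [← Complex.coe_smul]
      simp only [zero_add, hg, hl, this, hu, smul_smul]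
      rw [Complex.coe_smul, smul_smul, mul_inv_cancel₀ hd0.ne', one_smul]
      congr 1
      abel
    rw [hgd'] at hsum
    -- termwise bound
    have hterm : ∀ m : ℕ, ‖cauchyPowerSeries g 0 (s/2) m fun _ => (d:ℂ)‖ ≤
        Real.sqrt (ε * B) * (1/2) ^ m := by
      intro m
      have h1 : ‖cauchyPowerSeries g 0 (s/2) m fun _ => (d:ℂ)‖ ≤
          ‖cauchyPowerSeries g 0 (s/2) m‖ * d ^ m := by
        have := (cauchyPowerSeries g 0 (s/2) m).le_opNorm fun _ => (d:ℂ)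
        simpa [Complex.norm_real, Real.norm_eq_abs, abs_of_pos hd0] using this
      set c := ‖cauchyPowerSeries g 0 (s/2) m‖ with hc
      have hnn : 0 ≤ c := norm_nonneg _
      have hd2 : (s/16)⁻¹ * (s/2)⁻¹ * d^2 ≤ (1/4 : ℝ) := by
        have he : (s/16)⁻¹ * (s/2)⁻¹ * d^2 = 32 * d^2 / s^2 := by
          field_simp; ring
        rw [he, div_le_iff₀ (by positivity)]
        nlinarith [hdle, hd0.le, hs]
      have e1 : (c * d^m)^2 = (c * c) * (d^2)^m := by
        rw [← pow_mul, mul_comm 2 m, pow_mul]; ring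
      have e2 : c * c ≤ (ε * (s/16)⁻¹ ^ m) * (B * (s/2)⁻¹ ^ m) :=
        mul_le_mul (hcoefε m) (hcoefB m) hnn (by positivity)
      have hmain : (c * d ^ m) ^ 2 ≤ (ε * B) * ((1/4 : ℝ) ^ m) := by
        calc (c * d^m)^2 = (c * c) * (d^2)^m := e1
          _ ≤ (ε * (s/16)⁻¹ ^ m) * (B * (s/2)⁻¹ ^ m) * (d^2)^m :=
              mul_le_mul_of_nonneg_right e2 (by positivity)
          _ = (ε*B) * ((s/16)⁻¹ * (s/2)⁻¹ * d^2)^m := by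
              rw [mul_pow, mul_pow]; ring
          _ ≤ (ε*B) * ((1/4 : ℝ)^m) :=
              mul_le_mul_of_nonneg_left (pow_le_pow_left₀ (by positivity) hd2 m) hεB'
      have h3 : c * d ^ m ≤ Real.sqrt ((ε*B) * ((1/4 : ℝ)^m)) := by
        rw [show ((ε*B) * ((1/4:ℝ)^m)) = (ε*B) * ((1/4:ℝ)^m) from rfl]
        have := Real.sqrt_le_sqrt hmain
        rwa [Real.sqrt_sq (by positivity)] at this
      have h4 : Real.sqrt ((ε*B) * ((1/4 : ℝ)^m)) = Real.sqrt (ε*B) * (1/2:ℝ)^m := by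
        rw [Real.sqrt_mul hεB']
        congr 1
        rw [show ((1/4:ℝ)^m) = ((1/2:ℝ)^m)^2 by rw [← pow_mul, mul_comm m 2, pow_mul]; norm_num]
        exact Real.sqrt_sq (by positivity)
      calc ‖cauchyPowerSeries g 0 (s/2) m fun _ => (d:ℂ)‖ ≤ c * d ^ m := h1
        _ ≤ Real.sqrt ((ε*B) * ((1/4 : ℝ)^m)) := h3
        _ = Real.sqrt (ε*B) * (1/2:ℝ)^m := h4
    -- sum up
    have hsummb : Summable (fun m : ℕ => Real.sqrt (ε*B) * (1/2:ℝ)^m) :=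
      (summable_geometric_of_lt_one (by norm_num) (by norm_num)).mul_left _
    have hsumnorm : Summable (fun m => ‖cauchyPowerSeries g 0 (s/2) m fun _ => (d:ℂ)‖) :=
      Summable.of_nonneg_of_le (fun _ => norm_nonneg _) hterm hsummb
    calc ‖f x‖ = ‖∑' m, cauchyPowerSeries g 0 (s/2) m fun _ => (d:ℂ)‖ := by
          rw [hsum.tsum_eq]
      _ ≤ ∑' m, ‖cauchyPowerSeries g 0 (s/2) m fun _ => (d:ℂ)‖ :=
          norm_tsum_le_tsum_norm hsumnorm
      _ ≤ ∑' m, Real.sqrt (ε*B) * (1/2:ℝ)^m := Summable.tsum_le_tsum hterm hsumnorm hsummb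
      _ = Real.sqrt (ε*B) * 2 := by
          rw [tsum_mul_left, tsum_geometric_of_lt_one (by norm_num) (by norm_num)]
          norm_num
      _ = 2 * Real.sqrt (ε*B) := mul_comm _ _


end holomorphicLemmas

section chainLemmas

variable {α : Type*} [MetricSpace α]

/-- eventually-constant chains -/
def IsChainTo (T : Set α) (ε : ℝ) (x₀ : α) (m : ℕ) (x : α) : Prop :=
  ∃ p : ℕ → α, p 0 = x₀ ∧ (∀ i, p i ∈ T) ∧ (∀ i, dist (p (i+1)) (p i) ≤ ε) ∧
    ∀ k, m ≤ k → p k = x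

lemma IsChainTo.mono {T : Set α} {ε : ℝ} {x₀ : α} {m m' : ℕ} {x : α}
    (h : IsChainTo T ε x₀ m x) (hm : m ≤ m') : IsChainTo T ε x₀ m' x := by
  obtain ⟨p, h0, hT, hst, hev⟩ := h
  exact ⟨p, h0, hT, hst, fun k hk => hev k (hm.trans hk)⟩

lemma IsChainTo.extend {T : Set α} {ε : ℝ} {x₀ : α} {m : ℕ} {x x' : α}
    (hε : 0 ≤ ε) (h : IsChainTo T ε x₀ m x) (hx' : x' ∈ T) (hd : dist x' x ≤ ε) :
    IsChainTo T ε x₀ (m+1) x' := by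
  obtain ⟨p, h0, hT, hst, hev⟩ := h
  refine ⟨fun i => if i ≤ m then p i else x', ?_, ?_, ?_, ?_⟩
  · simp [h0]
  · intro i; by_cases hi : i ≤ m <;> simp [hi, hT i, hx']
  · intro i
    by_cases hi : i + 1 ≤ m
    · simp [hi, Nat.le_of_succ_le hi, hst i]
    · by_cases hi' : i ≤ m
      · have : i = m := by omega
        simp [hi, hi', this, hev m le_rfl, hd]
      · simpa [hi, hi'] using hε
  · intro k hk
    have : ¬ k ≤ m := by omega
    simp [this]

lemma chain_exists {T : Set α} (hT : IsCompact T) (hTc : IsPreconnected T)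
    {x₀ : α} (hx₀ : x₀ ∈ T) {ε : ℝ} (hε : 0 < ε) :
    ∃ N : ℕ, ∀ x ∈ T, IsChainTo T ε x₀ N x := by
  -- every point is chainable
  have hall : ∀ x ∈ T, ∃ m, IsChainTo T ε x₀ m x := by
    by_contra hcon
    push_neg at hcon
    obtain ⟨b, hbT, hb⟩ := hcon
    set A : Set α := {y | y ∈ T ∧ ∃ m, IsChainTo T ε x₀ m y} with hA
    set u : Set α := ⋃ y ∈ A, ball y ε with hu
    set B : Set α := {y | y ∈ T ∧ ¬ ∃ m, IsChainTo T ε x₀ m y} with hB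
    set v : Set α := ⋃ y ∈ B, ball y ε with hv
    have huo : IsOpen u := isOpen_biUnion fun _ _ => isOpen_ball
    have hvo : IsOpen v := isOpen_biUnion fun _ _ => isOpen_ball
    have hcov : T ⊆ u ∪ v := by
      intro y hy
      by_cases h : ∃ m, IsChainTo T ε x₀ m y
      · exact Or.inl (mem_biUnion ⟨hy, h⟩ (mem_ball_self hε))
      · exact Or.inr (mem_biUnion ⟨hy, h⟩ (mem_ball_self hε))
    have hne1 : (T ∩ u).Nonempty := by
      refine ⟨x₀, hx₀, mem_biUnion ⟨hx₀, 0, ?_⟩ (mem_ball_self hε)⟩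
      exact ⟨fun _ => x₀, rfl, fun _ => hx₀, fun i => by simp [hε.le], fun _ _ => rfl⟩
    have hne2 : (T ∩ v).Nonempty :=
      ⟨b, hbT, mem_biUnion (show b ∈ B from ⟨hbT, by rintro ⟨m, hm⟩; exact hb m hm⟩)
        (mem_ball_self hε)⟩
    obtain ⟨t, htT, htu, htv⟩ := hTc u v huo hvo hcov hne1 hne2
    obtain ⟨ya, hya, hta⟩ := mem_iUnion₂.1 htu
    obtain ⟨yb, hyb, htb⟩ := mem_iUnion₂.1 htv
    obtain ⟨m, hcha⟩ := hya.2
    have ht' : IsChainTo T ε x₀ (m+1) t :=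
      hcha.extend hε.le htT (mem_ball.1 hta).le
    have : IsChainTo T ε x₀ (m+2) yb :=
      ht'.extend hε.le hyb.1 (by rw [dist_comm]; exact (mem_ball.1 htb).le)
    exact hyb.2 ⟨m+2, this⟩
  -- uniform bound by compactness
  set U : ℕ → Set α := fun m => ⋃ y ∈ {y | y ∈ T ∧ IsChainTo T ε x₀ m y}, ball y ε with hU
  have hUo : ∀ m, IsOpen (U m) := fun m => isOpen_biUnion fun _ _ => isOpen_ball
  have hUcov : T ⊆ ⋃ m, U m := by
    intro x hx
    obtain ⟨m, hm⟩ := hall x hx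
    exact mem_iUnion.2 ⟨m, mem_biUnion ⟨hx, hm⟩ (mem_ball_self hε)⟩
  obtain ⟨t, ht⟩ := hT.elim_finite_subcover U hUo hUcov
  rcases t.eq_empty_or_nonempty with rfl | htne
  · refine ⟨0, fun x hx => ?_⟩
    have := ht hx
    simp at this
  · obtain ⟨N₀, hN₀⟩ := t.exists_le
    refine ⟨N₀ + 1, fun x hx => ?_⟩
    have := ht hx
    obtain ⟨m, hmt, hxm⟩ := mem_iUnion₂.1 this
    obtain ⟨y, hy, hxy⟩ := mem_iUnion₂.1 hxm
    exact (hy.2.mono (hN₀ m hmt)).extend hε.le hx (mem_ball.1 hxy).le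


section chainPropagation
open Complex
variable {E F : Type*} [NormedAddCommGroup E] [NormedSpace ℂ E]
  [NormedAddCommGroup F] [NormedSpace ℂ F] [CompleteSpace F]

lemma chain_bound {f : E → F} {U T : Set E} {s B ε : ℝ}
    (hs : 0 < s) (hf : DifferentiableOn ℂ f U)
    (hT : ∀ q ∈ T, closedBall q (s/2) ⊆ U)
    (hB : 0 < B) (hε : 0 ≤ ε) (hεB : ε ≤ 4*B)
    (hbig : ∀ z ∈ U, ‖f z‖ ≤ B)
    {p : ℕ → E} (hpT : ∀ i, p i ∈ T)
    (hstep : ∀ i, dist (p (i+1)) (p i) ≤ s/48)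
    (hp0 : ∀ z ∈ closedBall (p 0) (s/16), ‖f z‖ ≤ ε) :
    ∀ i, ∀ z ∈ closedBall (p i) (s/16),
      ‖f z‖ ≤ 4*B*((ε/(4*B)) ^ ((1/2:ℝ) ^ i : ℝ)) := by
  have hδ0 : 0 ≤ ε/(4*B) := by positivity
  have hδ1 : ε/(4*B) ≤ 1 := div_le_one_of_le₀ hεB (by positivity)
  intro i
  induction i with
  | zero =>
    intro z hz
    calc ‖f z‖ ≤ ε := hp0 z hz
      _ = 4*B*((ε/(4*B)) ^ ((1/2:ℝ) ^ 0 : ℝ)) := by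
          rw [pow_zero, Real.rpow_one]
          field_simp
  | succ i ih =>
    intro z hz
    have hεi0 : 0 ≤ 4*B*((ε/(4*B)) ^ ((1/2:ℝ) ^ i : ℝ)) := by positivity
    have hεiB : 4*B*((ε/(4*B)) ^ ((1/2:ℝ) ^ i : ℝ)) ≤ 4*B := by
      have h1 : (ε/(4*B)) ^ ((1/2:ℝ) ^ i : ℝ) ≤ 1 :=
        Real.rpow_le_one hδ0 hδ1 (by positivity)
      calc 4*B*((ε/(4*B)) ^ ((1/2:ℝ) ^ i : ℝ)) ≤ 4*B*1 :=
            mul_le_mul_of_nonneg_left h1 (by positivity)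
        _ = 4*B := mul_one _
    have hzi : z ∈ closedBall (p i) (s/12) := by
      rw [mem_closedBall] at hz ⊢
      calc dist z (p i) ≤ dist z (p (i+1)) + dist (p (i+1)) (p i) := dist_triangle _ _ _
        _ ≤ s/16 + s/48 := add_le_add hz (hstep i)
        _ = s/12 := by ring
    have := propagate hs hf (hT (p i) (hpT i)) hB hεi0 hεiB
      (fun w hw => hbig w (hT (p i) (hpT i) hw))
      (ih) hzi
    refine this.trans (le_of_eq ?_)
    have ha : ((1/2:ℝ) ^ i : ℝ) = (1/2:ℝ)^(i+1) + (1/2:ℝ)^(i+1) := by ring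
    have hsplit : (ε/(4*B)) ^ ((1/2:ℝ) ^ i : ℝ) =
        (ε/(4*B)) ^ ((1/2:ℝ) ^ (i+1) : ℝ) * (ε/(4*B)) ^ ((1/2:ℝ) ^ (i+1) : ℝ) := by
      rw [ha, Real.rpow_add' hδ0 (by positivity)]
    have hsq : (4*B*((ε/(4*B)) ^ ((1/2:ℝ) ^ i : ℝ))) * B =
        (2*B*((ε/(4*B)) ^ ((1/2:ℝ) ^ (i+1) : ℝ)))^2 := by
      rw [hsplit]; ring
    rw [hsq, Real.sqrt_sq (by positivity)]
    ring

end chainPropagation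

end chainLemmas

/-- A one-parameter group action on a domain `D ⊆ ℂⁿ`: a continuous map
`g : D × ℝ → D` such that each `g(·,t)` is a holomorphic automorphism of `D`
(its inverse `g(·,-t)` is again of this form, hence holomorphic), `g(z,0) = z`,
and `g(z,t+s) = g(g(z,t),s)`. -/
structure OneParamGroup (n : ℕ) (D : Set (EuclideanSpace ℂ (Fin n))) where
  toFun : EuclideanSpace ℂ (Fin n) → ℝ → EuclideanSpace ℂ (Fin n)
  cont : ContinuousOn (fun p : EuclideanSpace ℂ (Fin n) × ℝ => toFun p.1 p.2) (D ×ˢ univ)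
  mapsTo : ∀ t : ℝ, MapsTo (toFun · t) D D
  holo : ∀ t : ℝ, DifferentiableOn ℂ (toFun · t) D
  bijOn : ∀ t : ℝ, BijOn (toFun · t) D D
  map_zero : ∀ z ∈ D, toFun z 0 = z
  map_add : ∀ z ∈ D, ∀ t s : ℝ, toFun z (t + s) = toFun (toFun z t) s

/-- `X` is the holomorphic vector field generated by the one-parameter group action `A`:
`X(z) = ∂g/∂t(z,0)`, holomorphic on `D`. -/
def Generates {n : ℕ} {D : Set (EuclideanSpace ℂ (Fin n))} (A : OneParamGroup n D)
    (X : EuclideanSpace ℂ (Fin n) → EuclideanSpace ℂ (Fin n)) : Prop :=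
  DifferentiableOn ℂ X D ∧ ∀ z ∈ D, HasDerivAt (fun t => A.toFun z t) (X z) 0

/-- `‖X‖_K = sup_{z ∈ K} |X(z)|`. -/
noncomputable def supNormOn {n : ℕ}
    (X : EuclideanSpace ℂ (Fin n) → EuclideanSpace ℂ (Fin n))
    (K : Set (EuclideanSpace ℂ (Fin n))) : ℝ :=
  ⨆ z ∈ K, ‖X z‖


lemma le_supNormOn {n : ℕ} (X : EuclideanSpace ℂ (Fin n) → EuclideanSpace ℂ (Fin n))
    {S : Set (EuclideanSpace ℂ (Fin n))} {c : ℝ}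
    (hc : ∀ w ∈ S, ‖X w‖ ≤ c) {z : EuclideanSpace ℂ (Fin n)} (hz : z ∈ S) :
    ‖X z‖ ≤ supNormOn X S := by
  have hb : BddAbove (range fun w => ⨆ _ : w ∈ S, ‖X w‖) := by
    refine ⟨max c 0, ?_⟩
    rintro x ⟨w, rfl⟩
    simp only
    by_cases hw : w ∈ S
    · rw [ciSup_pos (f := fun _ => ‖X w‖) hw]; exact (hc w hw).trans (le_max_left _ _)
    · haveI : IsEmpty (w ∈ S) := ⟨hw⟩
      rw [Real.iSup_of_isEmpty]
      exact le_max_right _ _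
  calc ‖X z‖ = ⨆ _ : z ∈ S, ‖X z‖ := (ciSup_pos (f := fun _ => ‖X z‖) hz).symm
    _ ≤ supNormOn X S := le_ciSup hb z

lemma supNormOn_le {n : ℕ} {X : EuclideanSpace ℂ (Fin n) → EuclideanSpace ℂ (Fin n)}
    {S : Set (EuclideanSpace ℂ (Fin n))} {c : ℝ} (hc : 0 ≤ c)
    (h : ∀ z ∈ S, ‖X z‖ ≤ c) : supNormOn X S ≤ c := by
  apply Real.iSup_le _ hc
  intro z
  apply Real.iSup_le _ hc
  intro hz
  exact h z hz

/-- Let `R > 2r > 2s > 0`, let `K` be a connected compact set containing `0`,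
and let `D` be a domain with `B(0,2r) ⊆ D ⊆ B(0,R)` containing the closed `3s`-neighborhood
of `K`. Then there is a constant `C = C(K,R,s) > 0` (independent of `r`, `D` and `X`) such
that `‖X‖_K ≤ C·‖X‖_{B(0,r)}` for every holomorphic vector field `X` generated by a
one-parameter group action on `D`. -/
theorem stmt3 {n : ℕ} (K : Set (EuclideanSpace ℂ (Fin n))) (hK : IsCompact K)
    (hKconn : IsConnected K) (h0K : (0 : EuclideanSpace ℂ (Fin n)) ∈ K)
    (R s : ℝ) (hs : 0 < s) :
    ∃ C : ℝ, 0 < C ∧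
      ∀ r : ℝ, s < r → 2 * r < R →
        ∀ D : Set (EuclideanSpace ℂ (Fin n)), IsOpen D → IsConnected D →
          ball (0 : EuclideanSpace ℂ (Fin n)) (2 * r) ⊆ D →
          D ⊆ ball (0 : EuclideanSpace ℂ (Fin n)) R →
          {z : EuclideanSpace ℂ (Fin n) | Metric.infDist z K ≤ 3 * s} ⊆ D →
          ∀ A : OneParamGroup n D, ∀ X : EuclideanSpace ℂ (Fin n) → EuclideanSpace ℂ (Fin n),
            Generates A X →
            supNormOn X K ≤ C * supNormOn X (ball 0 r) := by
  classical
  set T : Set (EuclideanSpace ℂ (Fin n)) := {x | Metric.infDist x K ≤ s/2} with hTdef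
  have hKne : K.Nonempty := ⟨0, h0K⟩
  have hTeq : T = (fun q : (EuclideanSpace ℂ (Fin n)) × (EuclideanSpace ℂ (Fin n)) =>
      q.1 + q.2) '' (K ×ˢ closedBall 0 (s/2)) := by
    ext x
    constructor
    · intro hx
      obtain ⟨k, hk, hdk⟩ := hK.exists_infDist_eq_dist hKne x
      refine ⟨(k, x - k), ⟨hk, ?_⟩, by simp⟩
      simp only [mem_closedBall, dist_zero_right]
      rw [show x - k = -(k - x) by abel, norm_neg, ← dist_eq_norm, dist_comm, ← hdk]
      exact hx
    · rintro ⟨⟨k, b⟩, ⟨hk, hb⟩, rfl⟩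
      simp only [hTdef, mem_setOf_eq]
      calc Metric.infDist (k + b) K ≤ dist (k + b) k := Metric.infDist_le_dist_of_mem hk
        _ = ‖b‖ := by simp [dist_eq_norm]
        _ ≤ s/2 := by simpa [dist_zero_right] using hb
  have hTcomp : IsCompact T := by
    rw [hTeq]
    exact (hK.prod (isCompact_closedBall _ _)).image (continuous_fst.add continuous_snd)
  have hTconn : IsPreconnected T := by
    rw [hTeq]
    exact ((hKconn.prod ⟨⟨0, mem_closedBall_self (by positivity)⟩,
      (convex_closedBall (0 : EuclideanSpace ℂ (Fin n)) (s/2)).isPreconnected⟩).image _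
      (continuous_fst.add continuous_snd).continuousOn).isPreconnected
  have h0T : (0 : EuclideanSpace ℂ (Fin n)) ∈ T := by
    simp only [hTdef, mem_setOf_eq]
    rw [Metric.infDist_zero_of_mem h0K]
    positivity
  obtain ⟨N, hN⟩ := chain_exists hTcomp hTconn h0T (ε := s/48) (by positivity)
  set β : ℝ := (1/2:ℝ)^N with hβdef
  have hβ0 : 0 < β := by positivity
  set c₃ : ℝ := (s^2/(128*R^2)) ^ (β⁻¹ : ℝ) with hc₃def
  refine ⟨max 1 (s/(64*R*c₃)), lt_of_lt_of_le one_pos (le_max_left _ _), ?_⟩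
  intro r hsr hrR D hD hDconn hball hDR h3s A X hGen
  have hR : 0 < R := by linarith
  have hr : 0 < r := lt_trans hs hsr
  have hsR : s < R/2 := by linarith
  have hKD : K ⊆ D := fun z hz => h3s (by
    simp only [mem_setOf_eq, Metric.infDist_zero_of_mem hz]; positivity)
  have hXc : ContinuousOn X D := hGen.1.continuousOn
  set m := supNormOn X (ball (0 : EuclideanSpace ℂ (Fin n)) r) with hmdef
  have hcbD : closedBall (0 : EuclideanSpace ℂ (Fin n)) r ⊆ D :=
    subset_trans (closedBall_subset_ball (by linarith)) hball
  obtain ⟨zM, hzM, hzMax⟩ := (isCompact_closedBall (0 : EuclideanSpace ℂ (Fin n)) r).exists_isMaxOn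
    ⟨0, mem_closedBall_self hr.le⟩ ((hXc.mono hcbD).norm)
  have hm_ge : ∀ z ∈ ball (0 : EuclideanSpace ℂ (Fin n)) r, ‖X z‖ ≤ m :=
    fun z hz => le_supNormOn X (fun w hw => hzMax (ball_subset_closedBall hw)) hz
  have hm0 : 0 ≤ m := le_trans (norm_nonneg (X 0)) (hm_ge 0 (by simp [hr]))
  obtain ⟨ζ, hζK, hζmax'⟩ := hK.exists_isMaxOn hKne (hXc.mono hKD).norm
  have hζmax : ∀ z ∈ K, ‖X z‖ ≤ ‖X ζ‖ := fun z hz => hζmax' hz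
  set q := ‖X ζ‖ with hqdef
  have hsupK : supNormOn X K ≤ q := supNormOn_le (norm_nonneg _) hζmax
  have hfinal : q ≤ max 1 (s/(64*R*c₃)) * m := by
    by_cases hqm : q ≤ m
    · calc q ≤ 1 * m := by linarith
        _ ≤ max 1 (s/(64*R*c₃)) * m := mul_le_mul_of_nonneg_right (le_max_left _ _) hm0
    push_neg at hqm
    have hq0 : 0 < q := lt_of_le_of_lt hm0 hqm
    have hζD : ζ ∈ D := hKD hζK
    have flow_mem : ∀ z ∈ D, ∀ t : ℝ, A.toFun z t ∈ D := fun z hz t => A.mapsTo t hz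
    have flow_ODE : ∀ z ∈ D, ∀ t : ℝ,
        HasDerivAt (fun τ => A.toFun z τ) (X (A.toFun z t)) t := by
      intro z hz t
      have h1 : HasDerivAt (fun δ => A.toFun (A.toFun z t) δ) (X (A.toFun z t)) 0 :=
        hGen.2 _ (flow_mem z hz t)
      have h2 : HasDerivAt (fun τ : ℝ => τ - t) 1 t := (hasDerivAt_id t).sub_const t
      have h3 : HasDerivAt ((fun δ => A.toFun (A.toFun z t) δ) ∘ (fun τ : ℝ => τ - t))
          ((1:ℝ) • X (A.toFun z t)) t :=
        HasDerivAt.scomp_of_eq (h := fun τ : ℝ => τ - t)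
          (g₁ := fun δ => A.toFun (A.toFun z t) δ) t h1 h2 (by ring)
      have hfe : (fun τ : ℝ => A.toFun z τ) = fun τ : ℝ => A.toFun (A.toFun z t) (τ - t) := by
        funext τ
        rw [← A.map_add z hz t (τ - t)]
        congr 1
        ring
      rw [hfe]
      simpa [Function.comp_def] using h3
    have flow_cont : ∀ z ∈ D, Continuous fun τ : ℝ => A.toFun z τ := fun z hz =>
      continuous_iff_continuousAt.2 fun τ => (flow_ODE z hz τ).continuousAt
    have Xflow_cont : ∀ z ∈ D, Continuous fun τ : ℝ => X (A.toFun z τ) := fun z hz =>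
      hXc.comp_continuous (flow_cont z hz) (fun τ => flow_mem z hz τ)
    have equivar : ∀ z ∈ D, ∀ σ : ℝ,
        (fderiv ℂ (fun w => A.toFun w σ) z) (X z) = X (A.toFun z σ) := by
      intro z hz σ
      have hdz : DifferentiableAt ℂ (fun w => A.toFun w σ) z :=
        (A.holo σ).differentiableAt (hD.mem_nhds hz)
      have hc : HasDerivAt (fun δ : ℝ => A.toFun z δ) (X z) 0 := hGen.2 z hz
      have hf : HasFDerivAt (fun w => A.toFun w σ)
          ((fderiv ℂ (fun w => A.toFun w σ) z).restrictScalars ℝ) ((fun δ : ℝ => A.toFun z δ) 0) := by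
        have h00 : (fun δ : ℝ => A.toFun z δ) 0 = z := A.map_zero z hz
        rw [h00]
        exact (hdz.hasFDerivAt).restrictScalars ℝ
      have h1 := hf.comp_hasDerivAt 0 hc
      have h2 : HasDerivAt (fun δ : ℝ => A.toFun (A.toFun z σ) δ) (X (A.toFun z σ)) 0 :=
        hGen.2 _ (flow_mem z hz σ)
      have hfe : (fun δ : ℝ => A.toFun (A.toFun z δ) σ) =
          (fun δ : ℝ => A.toFun (A.toFun z σ) δ) := by
        funext δ
        rw [← A.map_add z hz δ σ, ← A.map_add z hz σ δ, add_comm]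
      have h1' : HasDerivAt (fun δ : ℝ => A.toFun (A.toFun z δ) σ)
          ((fderiv ℂ (fun w => A.toFun w σ) z) (X z)) 0 := h1
      rw [hfe] at h1'
      exact h1'.unique h2
    have bound1 : ∀ z, z ∈ D → closedBall z s ⊆ D → ∀ σ : ℝ,
        ‖X (A.toFun z σ)‖ ≤ (R/s) * ‖X z‖ := by
      intro z hzD hsub σ
      rcases eq_or_ne (X z) 0 with hXz | hXz
      · rw [← equivar z hzD σ, hXz, map_zero, norm_zero]
        positivity
      · have hw0 : 0 < ‖X z‖ := norm_pos_iff.2 hXz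
        set ρ : ℝ := s / ‖X z‖ with hρdef
        have hρ0 : 0 < ρ := by positivity
        have hmaps : ∀ w : ℂ, w ∈ closedBall (0:ℂ) ρ → z + w • (X z) ∈ closedBall z s := by
          intro w hw
          simp only [mem_closedBall, dist_eq_norm, add_sub_cancel_left, norm_smul]
          rw [mem_closedBall, dist_zero_right] at hw
          calc ‖w‖ * ‖X z‖ ≤ ρ * ‖X z‖ := mul_le_mul_of_nonneg_right hw hw0.le
            _ = s := by rw [hρdef]; field_simp
        have hgd : DifferentiableOn ℂ (fun w : ℂ => A.toFun (z + w • (X z)) σ)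
            (closedBall 0 ρ) := by
          apply (A.holo σ).comp
          · exact ((differentiable_id.smul_const (X z)).const_add z).differentiableOn
          · intro w hw
            exact hsub (hmaps w hw)
        have hgM : ∀ w ∈ closedBall (0:ℂ) ρ, ‖A.toFun (z + w • (X z)) σ‖ ≤ R := by
          intro w hw
          have hmem := hDR (flow_mem _ (hsub (hmaps w hw)) σ)
          rw [mem_ball, dist_zero_right] at hmem
          exact hmem.le
        have hsm : HasDerivAt (fun w : ℂ => z + w • (X z)) (X z) (0:ℂ) := by
          simpa using ((hasDerivAt_id (0:ℂ)).smul_const (X z)).const_add z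
        have hf2 : HasFDerivAt (fun w => A.toFun w σ)
            (fderiv ℂ (fun w => A.toFun w σ) z) ((fun w : ℂ => z + w • (X z)) 0) := by
          have : (fun w : ℂ => z + w • (X z)) 0 = z := by simp
          rw [this]
          exact ((A.holo σ).differentiableAt (hD.mem_nhds hzD)).hasFDerivAt
        have hg' : HasDerivAt (fun w : ℂ => A.toFun (z + w • (X z)) σ)
            ((fderiv ℂ (fun w => A.toFun w σ) z) (X z)) 0 := by have := hf2.comp_hasDerivAt 0 hsm; exact this
        have hb := deriv_le hρ0 hgd hgM hg'
        rw [equivar z hzD σ] at hb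
        calc ‖X (A.toFun z σ)‖ ≤ R / ρ := hb
          _ = (R/s) * ‖X z‖ := by rw [hρdef]; field_simp
    have hTD : ∀ x ∈ T, closedBall x (s/2) ⊆ D := by
      intro x hx w hw
      apply h3s
      simp only [mem_setOf_eq]
      rw [hTdef] at hx
      calc Metric.infDist w K ≤ Metric.infDist x K + dist w x :=
            Metric.infDist_le_infDist_add_dist
        _ ≤ s/2 + s/2 := add_le_add hx (mem_closedBall.1 hw)
        _ ≤ 3*s := by linarith
    have hsmallD : ∀ z ∈ closedBall (0 : EuclideanSpace ℂ (Fin n)) (s/16), z ∈ D := by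
      intro z hz
      apply h3s
      simp only [mem_setOf_eq]
      calc Metric.infDist z K ≤ dist z 0 := Metric.infDist_le_dist_of_mem h0K
        _ ≤ s/16 := mem_closedBall.1 hz
        _ ≤ 3*s := by linarith
    have hballD : ∀ z ∈ closedBall (0 : EuclideanSpace ℂ (Fin n)) (s/16),
        closedBall z s ⊆ D := by
      intro z hz w hw
      apply h3s
      simp only [mem_setOf_eq]
      calc Metric.infDist w K ≤ dist w 0 := Metric.infDist_le_dist_of_mem h0K
        _ ≤ dist w z + dist z 0 := dist_triangle _ _ _
        _ ≤ s + s/16 := add_le_add (mem_closedBall.1 hw) (mem_closedBall.1 hz)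
        _ ≤ 3*s := by linarith
    have smallflow : ∀ σ : ℝ, 0 ≤ σ → ∀ z ∈ closedBall (0 : EuclideanSpace ℂ (Fin n)) (s/16),
        ‖A.toFun z σ - z‖ ≤ σ * ((R/s) * m) := by
      intro σ hσ z hz
      have hzD : z ∈ D := hsmallD z hz
      have hftc : A.toFun z σ - z = ∫ τ in (0:ℝ)..σ, X (A.toFun z τ) := by
        have hint := intervalIntegral.integral_eq_sub_of_hasDerivAt
          (f := fun τ => A.toFun z τ) (f' := fun τ => X (A.toFun z τ))
          (fun τ _ => flow_ODE z hzD τ) ((Xflow_cont z hzD).intervalIntegrable 0 σ)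
        rw [hint]
        show A.toFun z σ - z = A.toFun z σ - A.toFun z 0
        rw [A.map_zero z hzD]
      rw [hftc]
      have hb : ∀ τ ∈ Set.uIoc (0:ℝ) σ, ‖X (A.toFun z τ)‖ ≤ (R/s) * m := by
        intro τ _
        refine (bound1 z hzD (hballD z hz) τ).trans ?_
        refine mul_le_mul_of_nonneg_left (hm_ge z ?_) (by positivity)
        rw [mem_ball, dist_zero_right]
        calc ‖z‖ ≤ s/16 := mem_closedBall_zero_iff.1 hz
          _ < r := by linarith
      calc ‖∫ τ in (0:ℝ)..σ, X (A.toFun z τ)‖ ≤ ((R/s)*m) * |σ - 0| :=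
            intervalIntegral.norm_integral_le_of_norm_le_const hb
        _ = σ * ((R/s)*m) := by rw [sub_zero, _root_.abs_of_nonneg hσ]; ring
    have hδstar0 : (0:ℝ) ≤ m*s/(64*R*q) := by positivity
    have hqne : q ≠ 0 := hq0.ne'
    have hRne : R ≠ 0 := hR.ne'
    have hsne : s ≠ 0 := hs.ne'
    have Gbound : ∀ σ : ℝ, 0 ≤ σ → σ ≤ s^2/(8*R*q) → ∀ x ∈ T,
        ‖A.toFun x σ - x‖ ≤ 8*R*((m*s/(64*R*q)) ^ (β:ℝ)) := by
      intro σ hσ0 hσT x hx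
      obtain ⟨p, hp0, hpT, hpstep, hpev⟩ := hN x hx
      have hGd : DifferentiableOn ℂ (fun w => A.toFun w σ - w) D :=
        (A.holo σ).sub differentiableOn_id
      have hGbig : ∀ w ∈ D, ‖A.toFun w σ - w‖ ≤ 2*R := by
        intro w hw
        have h1 := hDR (flow_mem w hw σ)
        have h2 := hDR hw
        rw [mem_ball, dist_zero_right] at h1 h2
        calc ‖A.toFun w σ - w‖ ≤ ‖A.toFun w σ‖ + ‖w‖ := norm_sub_le _ _
          _ ≤ 2*R := by linarith
      have hε0 : 0 ≤ (R/s)*m*σ := by positivity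
      have hεm : (R/s)*m*σ ≤ m*s/(8*q) := by
        have h1 : (R/s)*m*σ ≤ (R/s)*m*(s^2/(8*R*q)) :=
          mul_le_mul_of_nonneg_left hσT (by positivity)
        refine h1.trans (le_of_eq ?_)
        field_simp
      have hεB : (R/s)*m*σ ≤ 4*(2*R) := by
        refine hεm.trans ?_
        have h2 : m*s/(8*q) ≤ q*s/(8*q) := by
          apply div_le_div_of_nonneg_right ?_ (by positivity)
          exact mul_le_mul_of_nonneg_right hqm.le hs.le
        have h3 : q*s/(8*q) = s/8 := by field_simp
        rw [h3] at h2
        linarith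
      have hsmall0 : ∀ w ∈ closedBall (p 0) (s/16), ‖A.toFun w σ - w‖ ≤ (R/s)*m*σ := by
        rw [hp0]
        intro w hw
        calc ‖A.toFun w σ - w‖ ≤ σ * ((R/s)*m) := smallflow σ hσ0 w hw
          _ = (R/s)*m*σ := by ring
      have hres := chain_bound hs hGd hTD (by positivity : (0:ℝ) < 2*R) hε0 hεB hGbig
        hpT hpstep hsmall0 N x
        (by rw [hpev N le_rfl]; exact mem_closedBall_self (by positivity))
      refine hres.trans ?_
      have hbase : (R/s)*m*σ/(4*(2*R)) ≤ m*s/(64*R*q) := by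
        have h1 : (R/s)*m*σ/(4*(2*R)) ≤ (m*s/(8*q))/(4*(2*R)) := by gcongr
        refine h1.trans (le_of_eq ?_)
        rw [div_div]
        congr 1
        ring
      calc 4*(2*R)*(((R/s)*m*σ/(4*(2*R))) ^ ((1/2:ℝ)^N : ℝ))
          ≤ 4*(2*R)*((m*s/(64*R*q)) ^ ((1/2:ℝ)^N : ℝ)) := by
            apply mul_le_mul_of_nonneg_left _ (by positivity)
            exact Real.rpow_le_rpow (by positivity) hbase (by positivity)
        _ = 8*R*((m*s/(64*R*q)) ^ (β:ℝ)) := by rw [hβdef]; ring_nf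
    set T' : ℝ := s^2/(8*R*q) with hT'def
    have hT'0 : 0 ≤ T' := by positivity
    set Ψ : ℝ := 8*R*((m*s/(64*R*q)) ^ (β:ℝ)) with hΨdef
    have hΨ0 : 0 ≤ Ψ := by positivity
    have hXζq : ‖X ζ‖ = q := hqdef.symm
    have hζT : ζ ∈ T := by
      simp only [hTdef, mem_setOf_eq]
      rw [Metric.infDist_zero_of_mem hζK]
      positivity
    have hζball : ∀ w ∈ closedBall ζ (s/2), w ∈ T := by
      intro w hw
      simp only [hTdef, mem_setOf_eq]
      calc Metric.infDist w K ≤ dist w ζ := Metric.infDist_le_dist_of_mem hζK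
        _ ≤ s/2 := mem_closedBall.1 hw
    have DGbound : ∀ τ : ℝ, 0 ≤ τ → τ ≤ T' →
        ‖X (A.toFun ζ τ) - X ζ‖ ≤ Ψ / (s/(2*q)) := by
      intro τ hτ0 hτT
      have hρζ : (0:ℝ) < s/(2*q) := by positivity
      have hmaps : ∀ w : ℂ, w ∈ closedBall (0:ℂ) (s/(2*q)) →
          ζ + w • (X ζ) ∈ closedBall ζ (s/2) := by
        intro w hw
        simp only [mem_closedBall, dist_eq_norm, add_sub_cancel_left, norm_smul]
        rw [mem_closedBall, dist_zero_right] at hw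
        calc ‖w‖ * ‖X ζ‖ ≤ (s/(2*q)) * q := by
              rw [hXζq]
              exact mul_le_mul_of_nonneg_right hw hq0.le
          _ = s/2 := by field_simp
      have hgd : DifferentiableOn ℂ
          (fun w : ℂ => (A.toFun (ζ + w • (X ζ)) τ) - (ζ + w • (X ζ)))
          (closedBall 0 (s/(2*q))) := by
        apply DifferentiableOn.comp ((A.holo τ).sub differentiableOn_id)
        · exact ((differentiable_id.smul_const (X ζ)).const_add ζ).differentiableOn
        · intro w hw
          exact hTD ζ hζT (hmaps w hw)
      have hgM : ∀ w ∈ closedBall (0:ℂ) (s/(2*q)),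
          ‖A.toFun (ζ + w • (X ζ)) τ - (ζ + w • (X ζ))‖ ≤ Ψ := by
        intro w hw
        exact Gbound τ hτ0 hτT _ (hζball _ (hmaps w hw))
      have hsm : HasDerivAt (fun w : ℂ => ζ + w • (X ζ)) (X ζ) (0:ℂ) := by
        simpa using ((hasDerivAt_id (0:ℂ)).smul_const (X ζ)).const_add ζ
      set Mτ : EuclideanSpace ℂ (Fin n) →L[ℂ] EuclideanSpace ℂ (Fin n) :=
        (fderiv ℂ (fun w => A.toFun w τ) ζ) -
          ContinuousLinearMap.id ℂ (EuclideanSpace ℂ (Fin n)) with hMτdef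
      have hf2 : HasFDerivAt (fun y => A.toFun y τ - y) Mτ
          ((fun w : ℂ => ζ + w • (X ζ)) 0) := by
        have h00 : (fun w : ℂ => ζ + w • (X ζ)) 0 = ζ := by simp
        rw [h00, hMτdef]
        exact (((A.holo τ).differentiableAt (hD.mem_nhds hζD)).hasFDerivAt).sub
          (hasFDerivAt_id ζ)
      have hg' : HasDerivAt
          (fun w : ℂ => A.toFun (ζ + w • (X ζ)) τ - (ζ + w • (X ζ)))
          (Mτ (X ζ)) 0 := by have := hf2.comp_hasDerivAt 0 hsm; exact this
      have hb := deriv_le hρζ hgd hgM hg'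
      have hval : Mτ (X ζ) = X (A.toFun ζ τ) - X ζ := by
        rw [hMτdef, ContinuousLinearMap.sub_apply, equivar ζ hζD τ,
          ContinuousLinearMap.id_apply]
      rwa [hval] at hb
    set L : EuclideanSpace ℂ (Fin n) →L[ℝ] ℝ :=
      Complex.reCLM.comp ((innerSL ℂ (X ζ)).restrictScalars ℝ) with hLdef
    have hLapp : ∀ w, L w = (inner ℂ (X ζ) w : ℂ).re := fun w => rfl
    have hψ : ∀ τ : ℝ, HasDerivAt (fun t => L (A.toFun ζ t - ζ)) (L (X (A.toFun ζ τ))) τ :=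
      fun τ => (L.hasFDerivAt).comp_hasDerivAt τ ((flow_ODE ζ hζD τ).sub_const ζ)
    have hψcont : Continuous fun τ : ℝ => L (X (A.toFun ζ τ)) :=
      L.continuous.comp (Xflow_cont ζ hζD)
    have hftcψ := intervalIntegral.integral_eq_sub_of_hasDerivAt
      (f := fun t => L (A.toFun ζ t - ζ)) (f' := fun τ => L (X (A.toFun ζ τ)))
      (fun τ _ => hψ τ) (hψcont.intervalIntegrable 0 T')
    have hψzero : L (A.toFun ζ 0 - ζ) = 0 := by
      rw [A.map_zero ζ hζD]
      simp
    have hlow : ∀ τ ∈ Set.Icc (0:ℝ) T',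
        q^2 - q*(Ψ/(s/(2*q))) ≤ L (X (A.toFun ζ τ)) := by
      intro τ hτ
      have hdg := DGbound τ hτ.1 hτ.2
      have e1 : X (A.toFun ζ τ) = X ζ + (X (A.toFun ζ τ) - X ζ) := by abel
      rw [hLapp, e1, inner_add_right, Complex.add_re]
      have h1 : (inner ℂ (X ζ) (X ζ) : ℂ).re = q^2 := by
        rw [inner_self_eq_norm_sq_to_K, hXζq]
        norm_cast
      have h2 : |(inner ℂ (X ζ) (X (A.toFun ζ τ) - X ζ) : ℂ).re| ≤ q * (Ψ/(s/(2*q))) := by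
        calc |(inner ℂ (X ζ) (X (A.toFun ζ τ) - X ζ) : ℂ).re|
            ≤ ‖(inner ℂ (X ζ) (X (A.toFun ζ τ) - X ζ) : ℂ)‖ := by
              exact Complex.abs_re_le_norm _
          _ ≤ ‖X ζ‖ * ‖X (A.toFun ζ τ) - X ζ‖ := norm_inner_le_norm _ _
          _ ≤ q * (Ψ/(s/(2*q))) := by
              rw [hXζq]
              exact mul_le_mul_of_nonneg_left hdg hq0.le
      have h3 := neg_abs_le ((inner ℂ (X ζ) (X (A.toFun ζ τ) - X ζ) : ℂ).re)
      rw [h1]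
      linarith [h2, h3]
    have hint_low : T' * (q^2 - q*(Ψ/(s/(2*q)))) ≤ ∫ τ in (0:ℝ)..T', L (X (A.toFun ζ τ)) := by
      have hmono := intervalIntegral.integral_mono_on hT'0
        (intervalIntegrable_const (μ := MeasureTheory.volume) (c := q^2 - q*(Ψ/(s/(2*q)))))
        (hψcont.intervalIntegrable 0 T') hlow
      rw [intervalIntegral.integral_const] at hmono
      simpa [smul_eq_mul, mul_comm] using hmono
    have hupp : L (A.toFun ζ T' - ζ) ≤ q * Ψ := by
      rw [hLapp]
      calc (inner ℂ (X ζ) (A.toFun ζ T' - ζ) : ℂ).re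
          ≤ |(inner ℂ (X ζ) (A.toFun ζ T' - ζ) : ℂ).re| := le_abs_self _
        _ ≤ ‖(inner ℂ (X ζ) (A.toFun ζ T' - ζ) : ℂ)‖ := by
            exact Complex.abs_re_le_norm _
        _ ≤ ‖X ζ‖ * ‖A.toFun ζ T' - ζ‖ := norm_inner_le_norm _ _
        _ ≤ q * Ψ := by
            rw [hXζq]
            exact mul_le_mul_of_nonneg_left (Gbound T' hT'0 le_rfl ζ hζT) hq0.le
    have hcomb : T' * (q^2 - q*(Ψ/(s/(2*q)))) ≤ q * Ψ := by
      calc T' * (q^2 - q*(Ψ/(s/(2*q)))) ≤ ∫ τ in (0:ℝ)..T', L (X (A.toFun ζ τ)) := hint_low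
        _ = L (A.toFun ζ T' - ζ) - L (A.toFun ζ 0 - ζ) := hftcψ
        _ = L (A.toFun ζ T' - ζ) := by rw [hψzero]; ring
        _ ≤ q * Ψ := hupp
    have hΨlow : s^2/(16*R) ≤ Ψ := by
      have e1 : T' * (q^2 - q*(Ψ/(s/(2*q)))) = q*(s^2/(8*R)) - q*Ψ*(s/(4*R)) := by
        rw [hT'def]
        field_simp
        ring
      rw [e1] at hcomb
      have h2 : q*Ψ*(s/(4*R)) ≤ q*Ψ*1 := by
        apply mul_le_mul_of_nonneg_left _ (by positivity)
        rw [div_le_one (by positivity)]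
        linarith
      have h3 : q*(s^2/(8*R)) ≤ q*(2*Ψ) := by nlinarith [hcomb, h2]
      have h4 : s^2/(8*R) ≤ 2*Ψ := le_of_mul_le_mul_left h3 hq0
      have h5 : s^2/(16*R) = (s^2/(8*R))/2 := by
        rw [div_div]
        congr 1
        ring
      rw [h5]
      linarith
    have h5 : s^2/(128*R^2) ≤ (m*s/(64*R*q)) ^ (β:ℝ) := by
      have h6 : (s^2/(16*R))/(8*R) ≤ (m*s/(64*R*q)) ^ (β:ℝ) := by
        rw [div_le_iff₀ (by positivity : (0:ℝ) < 8*R)]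
        rw [hΨdef] at hΨlow
        nlinarith [hΨlow]
      refine le_trans (le_of_eq ?_) h6
      rw [div_div]
      congr 1
      ring
    have h7 : c₃ ≤ m*s/(64*R*q) := by
      have h8 := Real.rpow_le_rpow (by positivity) h5 (by positivity : (0:ℝ) ≤ β⁻¹)
      rwa [← Real.rpow_mul hδstar0, mul_inv_cancel₀ hβ0.ne', Real.rpow_one] at h8
    have hc₃0 : 0 < c₃ := by
      rw [hc₃def]
      exact Real.rpow_pos_of_pos (by positivity) _
    have h9 : q ≤ m*s/(64*R*c₃) := by
      rw [le_div_iff₀ (by positivity)]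
      have h10 := (le_div_iff₀ (by positivity : (0:ℝ) < 64*R*q)).1 h7
      nlinarith [h10]
    calc q ≤ m*s/(64*R*c₃) := h9
      _ = (s/(64*R*c₃))*m := by ring
      _ ≤ max 1 (s/(64*R*c₃)) * m := mul_le_mul_of_nonneg_right (le_max_right _ _) hm0
  exact hsupK.trans hfinal
end

section
/- Let Π = {ζ ∈ ℂ : Im ζ > 0} be the upper half-plane and Λ = {ζ ∈ ℂ : 0 < Im ζ < 1}. If ψ is a holomorphic automorphism of Π such that ψ(Λ) = Λ, then there exists t ∈ ℝ such that ψ(ζ) = ζ + t for all ζ ∈ Π. -/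
open Set

/-- `f` is a holomorphic automorphism of the domain `Ω`: a bijective holomorphic
self-map of `Ω` with holomorphic inverse. -/
def IsBiholOn {E : Type*} [NormedAddCommGroup E] [NormedSpace ℂ E]
    (Ω : Set E) (f : E → E) : Prop :=
  DifferentiableOn ℂ f Ω ∧ BijOn f Ω Ω ∧
    ∃ g : E → E, DifferentiableOn ℂ g Ω ∧ InvOn g f Ω Ω

/-- The upper half-plane `Π = {ζ : Im ζ > 0}`. -/
def upperHalfPlane' : Set ℂ := {ζ : ℂ | 0 < ζ.im}

/-- The strip `Λ = {ζ : 0 < Im ζ < 1}`. -/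
def stripSet : Set ℂ := {ζ : ℂ | 0 < ζ.im ∧ ζ.im < 1}

open Complex Metric

noncomputable def Cay (z : ℂ) : ℂ := (z - I) / (z + I)
noncomputable def Dcay (w : ℂ) : ℂ := I * (1 + w) / (1 - w)

lemma hH_ne (z : ℂ) (hz : 0 < z.im) : z + I ≠ 0 := by
  intro h
  have : (z + I).im = 0 := by rw [h]; simp
  simp [Complex.add_im] at this
  linarith

lemma norm_lt (a b : ℂ) (h : Complex.normSq a < Complex.normSq b) : ‖a‖ < ‖b‖ := by
  have h2 : ‖a‖^2 < ‖b‖^2 := by rw [Complex.sq_norm, Complex.sq_norm]; exact h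
  nlinarith [norm_nonneg a, norm_nonneg b]

lemma cay_mem (z : ℂ) (hz : 0 < z.im) : Cay z ∈ ball (0:ℂ) 1 := by
  rw [mem_ball_zero_iff, Cay, norm_div]
  have hne := hH_ne z hz
  rw [div_lt_one (by simpa [norm_pos_iff] using hne)]
  apply norm_lt
  simp [Complex.normSq_apply, Complex.sub_re, Complex.sub_im, Complex.add_re, Complex.add_im]
  nlinarith

lemma dcay_ne (w : ℂ) (hw : w ∈ ball (0:ℂ) 1) : (1:ℂ) - w ≠ 0 := by
  intro h
  rw [sub_eq_zero] at h
  rw [mem_ball_zero_iff, ← h] at hw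
  simp at hw

lemma dcay_mem (w : ℂ) (hw : w ∈ ball (0:ℂ) 1) : 0 < (Dcay w).im := by
  have h1 := dcay_ne w hw
  have h2 : Complex.normSq w < 1 := by
    rw [mem_ball_zero_iff] at hw
    have := Complex.sq_norm w
    nlinarith [norm_nonneg w]
  rw [Dcay, Complex.div_im, div_sub_div_same]
  apply div_pos
  · simp [Complex.mul_im, Complex.mul_re, Complex.add_re, Complex.add_im, Complex.sub_re, Complex.sub_im]
    rw [Complex.normSq_apply] at h2
    nlinarith
  · exact Complex.normSq_pos.2 h1

lemma dcay_cay (z : ℂ) (hz : 0 < z.im) : Dcay (Cay z) = z := by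
  have hne := hH_ne z hz
  have h2 : (1:ℂ) - Cay z ≠ 0 := dcay_ne _ (cay_mem z hz)
  rw [Cay] at h2
  rw [Dcay, Cay, div_eq_iff h2]
  field_simp
  ring

lemma cay_dcay (w : ℂ) (hw : w ∈ ball (0:ℂ) 1) : Cay (Dcay w) = w := by
  have hne : Dcay w + I ≠ 0 := hH_ne _ (dcay_mem w hw)
  have h1 := dcay_ne w hw
  rw [Dcay] at hne
  rw [Cay, Dcay, div_eq_iff hne]
  field_simp
  ring

lemma cay_diff (z : ℂ) (hz : 0 < z.im) : DifferentiableAt ℂ Cay z := by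
  apply DifferentiableAt.div
  · fun_prop
  · fun_prop
  · exact hH_ne z hz

lemma dcay_diff (w : ℂ) (hw : w ∈ ball (0:ℂ) 1) : DifferentiableAt ℂ Dcay w := by
  apply DifferentiableAt.div
  · fun_prop
  · fun_prop
  · exact dcay_ne w hw

lemma disk_rigid (g h : ℂ → ℂ) (hg : DifferentiableOn ℂ g (ball 0 1))
    (hgm : MapsTo g (ball (0:ℂ) 1) (ball (0:ℂ) 1)) (hg0 : g 0 = 0)
    (hh : DifferentiableOn ℂ h (ball 0 1))
    (hhm : MapsTo h (ball (0:ℂ) 1) (ball (0:ℂ) 1)) (hh0 : h 0 = 0)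
    (hinv : ∀ w ∈ ball (0:ℂ) 1, h (g w) = w) :
    ‖deriv g 0‖ = 1 ∧ ∀ w ∈ ball (0:ℂ) 1, g w = deriv g 0 * w := by
  have h0mem : (0:ℂ) ∈ ball (0:ℂ) 1 := by simp
  have hgm' : MapsTo g (ball (0:ℂ) 1) (ball (g 0) 1) := by rwa [hg0]
  have hhm' : MapsTo h (ball (0:ℂ) 1) (ball (h 0) 1) := by rwa [hh0]
  have hg1 : ‖deriv g 0‖ ≤ 1 := by
    have := Complex.norm_deriv_le_div_of_mapsTo_ball hg (hgm'.mono_right ball_subset_closedBall) one_pos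
    simpa using this
  have hh1 : ‖deriv h 0‖ ≤ 1 := by
    have := Complex.norm_deriv_le_div_of_mapsTo_ball hh (hhm'.mono_right ball_subset_closedBall) one_pos
    simpa using this
  have hgd : DifferentiableAt ℂ g 0 := hg.differentiableAt (isOpen_ball.mem_nhds h0mem)
  have hhd : DifferentiableAt ℂ h 0 := hh.differentiableAt (isOpen_ball.mem_nhds h0mem)
  have hcomp : deriv (h ∘ g) 0 = 1 := by
    have heq : (h ∘ g) =ᶠ[nhds (0:ℂ)] id := by
      filter_upwards [isOpen_ball.mem_nhds h0mem] with w hw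
      exact hinv w hw
    rw [Filter.EventuallyEq.deriv_eq heq]
    simp
  have hchain : deriv h (g 0) * deriv g 0 = 1 := by
    rw [← deriv_comp (x := 0) (h₂ := h) (by rwa [hg0]) hgd]
    exact hcomp
  rw [hg0] at hchain
  have hge : ‖deriv g 0‖ = 1 := by
    have : ‖deriv h 0‖ * ‖deriv g 0‖ = 1 := by
      rw [← norm_mul, hchain]; simp
    nlinarith [norm_nonneg (deriv g 0), norm_nonneg (deriv h 0)]
  refine ⟨hge, ?_⟩
  have heqq := Complex.affine_of_mapsTo_ball_of_exists_norm_dslope_eq_div hg (hgm'.mono_right ball_subset_closedBall) h0mem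
    (by rw [dslope_same]; simpa using hge)
  intro w hw
  have := heqq hw
  simp only [hg0, dslope_same] at this
  rw [this]
  simp [mul_comm]

lemma isOpen_H : IsOpen upperHalfPlane' := by
  have : upperHalfPlane' = Complex.im ⁻¹' Ioi 0 := rfl
  rw [this]
  exact isOpen_Ioi.preimage Complex.continuous_im

lemma boundary_line (ψ : ℂ → ℂ)
    (hd : DifferentiableOn ℂ ψ upperHalfPlane')
    (hbij : BijOn ψ upperHalfPlane' upperHalfPlane')
    (hΛ : ψ '' stripSet = stripSet)
    (z : ℂ) (hz : z.im = 1) : (ψ z).im = 1 := by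
  have hzH : z ∈ upperHalfPlane' := by simp [upperHalfPlane', hz]
  have hcont : ContinuousAt ψ z :=
    (hd.continuousOn.continuousAt (isOpen_H.mem_nhds hzH))
  set u : ℕ → ℂ := fun n => z - (((n:ℝ)+2)⁻¹ : ℝ) * I with hu_def
  have hmem : ∀ n, u n ∈ stripSet := by
    intro n
    have h1 : (0:ℝ) < ((n:ℝ)+2)⁻¹ := by positivity
    have h2 : ((n:ℝ)+2)⁻¹ ≤ 2⁻¹ := by
      apply inv_anti₀ (by norm_num)
      linarith [Nat.cast_nonneg (α := ℝ) n]
    have him : (u n).im = 1 - ((n:ℝ)+2)⁻¹ := by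
      rw [hu_def]
      simp only [Complex.sub_im, Complex.mul_im, Complex.ofReal_re, Complex.ofReal_im,
        Complex.I_re, Complex.I_im, hz]
      ring
    constructor <;> rw [him] <;> norm_num <;> linarith
  have hu : Filter.Tendsto u Filter.atTop (nhds z) := by
    have h0 : Filter.Tendsto (fun n : ℕ => (((n:ℝ)+2)⁻¹ : ℝ)) Filter.atTop (nhds 0) :=
      tendsto_inv_atTop_zero.comp
        (Filter.tendsto_atTop_add_const_right _ 2 tendsto_natCast_atTop_atTop)
    have h1 : Filter.Tendsto (fun n : ℕ => ((((n:ℝ)+2)⁻¹ : ℝ) : ℂ) * I) Filter.atTop (nhds 0) := by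
      have := ((Complex.continuous_ofReal.tendsto 0).comp h0).mul_const I
      simpa only [Function.comp_def, Complex.ofReal_zero, zero_mul] using this
    have h2 := (tendsto_const_nhds (x := z) (f := Filter.atTop (α := ℕ))).sub h1
    simp only [sub_zero] at h2
    exact h2
  have hψu : Filter.Tendsto (fun n => ψ (u n)) Filter.atTop (nhds (ψ z)) :=
    hcont.tendsto.comp hu
  have him : Filter.Tendsto (fun n => (ψ (u n)).im) Filter.atTop (nhds ((ψ z).im)) :=
    (Complex.continuous_im.tendsto _).comp hψu
  have hle : (ψ z).im ≤ 1 := by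
    apply le_of_tendsto him
    filter_upwards with n
    have : ψ (u n) ∈ stripSet := by
      rw [← hΛ]; exact mem_image_of_mem ψ (hmem n)
    exact this.2.le
  have hpos : 0 < (ψ z).im := hbij.mapsTo hzH
  rcases lt_or_eq_of_le hle with hlt | heq
  · exfalso
    have : ψ z ∈ stripSet := ⟨hpos, hlt⟩
    rw [← hΛ] at this
    obtain ⟨w, hw, hwz⟩ := this
    have hwH : w ∈ upperHalfPlane' := hw.1
    have := hbij.injOn hwH hzH hwz
    rw [this] at hw
    exact absurd hw.2 (by rw [hz]; exact lt_irrefl 1)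
  · exact heq

/-- If `ψ` is a holomorphic automorphism of the upper half-plane `Π`
with `ψ(Λ) = Λ`, where `Λ = {0 < Im ζ < 1}`, then `ψ` is the translation `ζ ↦ ζ + t`
for some real `t`. -/
theorem stmt10 (ψ : ℂ → ℂ) (hψ : IsBiholOn upperHalfPlane' ψ)
    (hΛ : ψ '' stripSet = stripSet) :
    ∃ t : ℝ, ∀ ζ ∈ upperHalfPlane', ψ ζ = ζ + t := by
  obtain ⟨hd, hbij, g₀, hg₀d, hg₀inv⟩ := hψ
  have hIH : (I : ℂ) ∈ upperHalfPlane' := by simp [upperHalfPlane']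
  have haim : (ψ I).im = 1 := boundary_line ψ hd hbij hΛ I (by simp)
  set q : ℝ := (ψ I).re with hq
  set χ : ℂ → ℂ := fun z => ψ z - (q : ℂ) with hχdef
  have hχI : χ I = I := by
    have : ψ I = (q : ℂ) + I := by
      rw [hq]
      nth_rewrite 1 [← Complex.re_add_im (ψ I)]
      rw [haim]; simp
    simp [hχdef, this]
  have hχH : ∀ z ∈ upperHalfPlane', χ z ∈ upperHalfPlane' := by
    intro z hz
    have := hbij.mapsTo hz
    simpa [hχdef, upperHalfPlane'] using this
  set χi : ℂ → ℂ := fun z => g₀ (z + (q : ℂ)) with hχidef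
  have hg₀H : ∀ z ∈ upperHalfPlane', g₀ z ∈ upperHalfPlane' := by
    intro z hz
    obtain ⟨w, hw, hwz⟩ := hbij.surjOn hz
    rw [← hwz, hg₀inv.1 hw]
    exact hw
  have hχiH : ∀ z ∈ upperHalfPlane', χi z ∈ upperHalfPlane' := by
    intro z hz
    apply hg₀H
    simpa [upperHalfPlane'] using hz
  have hχinv : ∀ z ∈ upperHalfPlane', χi (χ z) = z := by
    intro z hz
    simp only [hχidef, hχdef, sub_add_cancel]
    exact hg₀inv.1 hz
  -- the conjugated disk map
  set G : ℂ → ℂ := fun w => Cay (χ (Dcay w)) with hGdef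
  set Gi : ℂ → ℂ := fun w => Cay (χi (Dcay w)) with hGidef
  have hDmem : ∀ w ∈ ball (0:ℂ) 1, Dcay w ∈ upperHalfPlane' := fun w hw => dcay_mem w hw
  have hGmaps : MapsTo G (ball (0:ℂ) 1) (ball (0:ℂ) 1) := fun w hw =>
    cay_mem _ (hχH _ (hDmem w hw))
  have hGimaps : MapsTo Gi (ball (0:ℂ) 1) (ball (0:ℂ) 1) := fun w hw =>
    cay_mem _ (hχiH _ (hDmem w hw))
  have hDcay0 : Dcay 0 = I := by simp [Dcay]
  have hCayI : Cay I = 0 := by simp [Cay]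
  have hG0 : G 0 = 0 := by rw [hGdef]; simp only [hDcay0, hχI, hCayI]
  have hGi0 : Gi 0 = 0 := by
    rw [hGidef]; simp only [hDcay0]
    have h4 := hχinv I hIH
    rw [hχI] at h4
    rw [h4, hCayI]
  have hχd : ∀ z ∈ upperHalfPlane', DifferentiableAt ℂ χ z := by
    intro z hz
    exact (hd.differentiableAt (isOpen_H.mem_nhds hz)).sub_const _
  have hχid : ∀ z ∈ upperHalfPlane', DifferentiableAt ℂ χi z := by
    intro z hz
    have : DifferentiableAt ℂ g₀ (z + (q:ℂ)) :=
      hg₀d.differentiableAt (isOpen_H.mem_nhds (by simpa [upperHalfPlane'] using hz))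
    exact this.comp z (by fun_prop)
  have hGd : DifferentiableOn ℂ G (ball (0:ℂ) 1) := by
    intro w hw
    have h1 := dcay_diff w hw
    have h2 := hχd _ (hDmem w hw)
    have h3 := cay_diff _ (hχH _ (hDmem w hw))
    exact ((h3.comp _ h2).comp w h1).differentiableWithinAt
  have hGid : DifferentiableOn ℂ Gi (ball (0:ℂ) 1) := by
    intro w hw
    have h1 := dcay_diff w hw
    have h2 := hχid _ (hDmem w hw)
    have h3 := cay_diff _ (hχiH _ (hDmem w hw))
    exact ((h3.comp _ h2).comp w h1).differentiableWithinAt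
  have hGinv : ∀ w ∈ ball (0:ℂ) 1, Gi (G w) = w := by
    intro w hw
    rw [hGdef, hGidef]
    simp only
    rw [dcay_cay _ (hχH _ (hDmem w hw)), hχinv _ (hDmem w hw), cay_dcay w hw]
  obtain ⟨hnorm_e, heqn⟩ := disk_rigid G Gi hGd hGmaps hG0 hGid hGimaps hGi0 hGinv
  set e : ℂ := deriv G 0 with he
  -- key Möbius identity
  have hkey : ∀ z ∈ upperHalfPlane',
      χ z * ((z + I) - e * (z - I)) = I * ((z + I) + e * (z - I)) := by
    intro z hz
    have hCz : Cay z ∈ ball (0:ℂ) 1 := cay_mem z hz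
    have hw : e * Cay z ∈ ball (0:ℂ) 1 := by
      rw [mem_ball_zero_iff, norm_mul, hnorm_e, one_mul, ← mem_ball_zero_iff]
      exact hCz
    have hχz : χ z = Dcay (e * Cay z) := by
      have h1 : G (Cay z) = e * Cay z := heqn _ hCz
      have h2 : G (Cay z) = Cay (χ z) := by rw [hGdef]; simp only [dcay_cay z hz]
      rw [← dcay_cay (χ z) (hχH z hz), ← h2, h1]
    have hne1 : (1:ℂ) - e * Cay z ≠ 0 := dcay_ne _ hw
    have hmul : χ z * (1 - e * Cay z) = I * (1 + e * Cay z) := by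
      rw [hχz, Dcay, div_mul_cancel₀ _ hne1]
    have hCzm : Cay z * (z + I) = z - I := by
      rw [Cay, div_mul_cancel₀ _ (hH_ne z hz)]
    calc χ z * ((z + I) - e * (z - I)) = χ z * (1 - e * Cay z) * (z + I) := by
          rw [← hCzm]; ring
      _ = I * (1 + e * Cay z) * (z + I) := by rw [hmul]
      _ = I * ((z + I) + e * (Cay z * (z + I))) := by ring
      _ = I * ((z + I) + e * (z - I)) := by rw [hCzm]
  -- evaluate at 1 + I and -1 + I
  have hz1 : (1 + I : ℂ) ∈ upperHalfPlane' := by simp [upperHalfPlane']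
  have hz2 : (-1 + I : ℂ) ∈ upperHalfPlane' := by simp [upperHalfPlane']
  have him1 : (χ (1 + I)).im = 1 := by
    simp only [hχdef, Complex.sub_im, Complex.ofReal_im, sub_zero]
    exact boundary_line ψ hd hbij hΛ _ (by simp)
  have him2 : (χ (-1 + I)).im = 1 := by
    simp only [hχdef, Complex.sub_im, Complex.ofReal_im, sub_zero]
    exact boundary_line ψ hd hbij hΛ _ (by simp)
  have hE1 := hkey _ hz1
  have hE2 := hkey _ hz2
  set r1 : ℝ := (χ (1 + I)).re with hr1
  set r2 : ℝ := (χ (-1 + I)).re with hr2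
  set er : ℝ := e.re with her
  set ei : ℝ := e.im with hei
  have hnorm : er ^ 2 + ei ^ 2 = 1 := by
    have : Complex.normSq e = 1 := by
      rw [← Complex.sq_norm, hnorm_e]
      norm_num
    rw [Complex.normSq_apply] at this
    nlinarith [this]
  rw [Complex.ext_iff] at hE1 hE2
  obtain ⟨hE1re, hE1im⟩ := hE1
  obtain ⟨hE2re, hE2im⟩ := hE2
  simp only [Complex.mul_re, Complex.mul_im, Complex.add_re, Complex.add_im, Complex.sub_re,
    Complex.sub_im, Complex.I_re, Complex.I_im, Complex.one_re, Complex.one_im, Complex.neg_re,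
    Complex.neg_im, him1, him2, ← hr1, ← hr2, ← her, ← hei] at hE1re hE1im hE2re hE2im
  -- solve for e
  have eq1 : r1 * (1 - er) = -2 * ei := by linarith
  have eq2 : r1 * (2 - ei) = 2 * er := by linarith
  have eq3 : r2 * (er - 1) = 2 * ei := by linarith
  have eq4 : r2 * (2 + ei) = -2 * er := by linarith
  have hA : 2 * er * (1 - er) + 2 * ei * (2 - ei) = 0 := by
    linear_combination (2 - ei) * eq1 - (1 - er) * eq2
  have hB : 2 * er * (1 - er) - 2 * ei * (2 + ei) = 0 := by
    linear_combination (2 + ei) * eq3 - (er - 1) * eq4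
  have heival : ei = 0 := by linarith [hA, hB]
  have herval : er = 1 := by nlinarith [hA, hnorm, heival]
  have he1 : e = 1 := by
    rw [Complex.ext_iff]
    exact ⟨by rw [← her, herval]; simp, by rw [← hei, heival]; simp⟩
  -- conclude
  refine ⟨q, fun z hz => ?_⟩
  have hk := hkey z hz
  rw [he1, one_mul] at hk
  have h2I : ((z + I) - (z - I)) = 2 * I := by ring
  have h2z : ((z + I) + (z - I)) = 2 * z := by ring
  rw [h2I, h2z] at hk
  have hχz : χ z = z := by
    have h2Ine : (2 * I : ℂ) ≠ 0 := by simp [Complex.I_ne_zero]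
    have : χ z * (2 * I) = z * (2 * I) := by rw [hk]; ring
    exact mul_right_cancel₀ h2Ine this
  have : ψ z - (q : ℂ) = z := hχz
  linear_combination this
end

section
/- Let Q = {z ∈ Δ : |z − 1/2| > 1/2} and D = {(z, w) ∈ ℂ² : z ∈ Q, w ∈ Δ, w ≠ z}. Then every holomorphic automorphism F of D extends to a holomorphic automorphism F̂ of Q × Δ, i.e., there is a bijective holomorphic map F̂ : Q × Δ → Q × Δ with holomorphic inverse such that F̂ agrees with F on D. -/
open Set

/-- The unit disc `Δ ⊆ ℂ`. -/
def unitDisc : Set ℂ := {z : ℂ | ‖z‖ < 1}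

/-- `Q = {z ∈ Δ : |z − 1/2| > 1/2}`. -/
def Qset : Set ℂ := {z : ℂ | ‖z‖ < 1 ∧ 1 / 2 < ‖z - 1 / 2‖}

/-- `D = {(z,w) : z ∈ Q, w ∈ Δ, w ≠ z}`. -/
def Dset : Set (ℂ × ℂ) := {p : ℂ × ℂ | p.1 ∈ Qset ∧ ‖p.2‖ < 1 ∧ p.2 ≠ p.1}


section Aux

open Metric Complex Filter Function Topology


-- Cauchy estimate at the center from a closed-ball bound
lemma cauchyBound {f : ℂ → ℂ} {c : ℂ} {R C : ℝ} (hR : 0 < R)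
    (hd : DifferentiableOn ℂ f (closedBall c R))
    (hC : ∀ z ∈ closedBall c R, ‖f z‖ ≤ C) : ‖deriv f c‖ ≤ C / R := by
  refine Complex.norm_deriv_le_of_forall_mem_sphere_norm_le hR ⟨hd.mono ball_subset_closedBall, ?_⟩
    fun z hz => hC z (sphere_subset_closedBall hz)
  rw [closure_ball c hR.ne']
  exact hd.continuousOn

-- Maximum modulus principle on a closed ball
lemma maxBall {f : ℂ → ℂ} {c : ℂ} {R C : ℝ} (hR : 0 < R)
    (hd : DifferentiableOn ℂ f (closedBall c R))
    (hC : ∀ z ∈ sphere c R, ‖f z‖ ≤ C) : ∀ z ∈ closedBall c R, ‖f z‖ ≤ C := by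
  intro z hz
  have hcl : closure (ball c R) = closedBall c R := closure_ball c hR.ne'
  refine Complex.norm_le_of_forall_mem_frontier_norm_le isBounded_ball
    ⟨hd.mono ball_subset_closedBall, by rw [hcl]; exact hd.continuousOn⟩ ?_ ?_
  · intro x hx
    rw [frontier_ball c hR.ne'] at hx
    exact hC x hx
  · rwa [hcl]

def Dp (U V : Set ℂ) : Set (ℂ × ℂ) := {p : ℂ × ℂ | p.1 ∈ U ∧ p.2 ∈ V ∧ p.2 ≠ p.1}

lemma isOpen_Dp {U V : Set ℂ} (hU : IsOpen U) (hV : IsOpen V) : IsOpen (Dp U V) := by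
  have h1 : Dp U V = (Prod.fst ⁻¹' U) ∩ ((Prod.snd ⁻¹' V) ∩ {p : ℂ × ℂ | p.2 ≠ p.1}) := by
    ext p; simp [Dp, and_assoc]
  rw [h1]
  exact (hU.preimage continuous_fst).inter ((hV.preimage continuous_snd).inter
    (isOpen_ne_fun continuous_snd continuous_fst))

section EXT
variable {U V : Set ℂ} {h : ℂ × ℂ → ℂ} {C : ℝ}

/-- the one-variable extension of `w ↦ h (z, w)` across `w = z`. -/
noncomputable def Gex (h : ℂ × ℂ → ℂ) (z : ℂ) : ℂ → ℂ :=
  update (fun w => h (z, w)) z (limUnder (𝓝[≠] z) (fun w => h (z, w)))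

lemma Gex_of_ne {z w : ℂ} (hw : w ≠ z) : Gex h z w = h (z, w) := update_of_ne hw _ _

variable (hUo : IsOpen U) (hVo : IsOpen V) (hUV : U ⊆ V)
  (hd : DifferentiableOn ℂ h (Dp U V)) (hb : ∀ p ∈ Dp U V, ‖h p‖ ≤ C)

include hUo hVo hUV hd hb in
lemma Gex_diff : ∀ z ∈ U, DifferentiableOn ℂ (Gex h z) V := by
  intro z hz
  refine Complex.differentiableOn_update_limUnder_of_bddAbove (hVo.mem_nhds (hUV hz)) ?_ ?_
  · intro w hw
    have hmem : (z, w) ∈ Dp U V := ⟨hz, hw.1, hw.2⟩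
    exact ((hd.differentiableAt ((isOpen_Dp hUo hVo).mem_nhds hmem)).comp w
      ((differentiableAt_const z).prodMk differentiableAt_id)).differentiableWithinAt
  · refine ⟨C, ?_⟩
    rintro x ⟨w, hw, rfl⟩
    exact hb _ ⟨hz, hw.1, hw.2⟩

include hUo hVo hUV hd hb in
lemma Gex_bound : ∀ z ∈ U, ∀ w ∈ V, ‖Gex h z w‖ ≤ C := by
  intro z hz w hw
  rcases eq_or_ne w z with rfl | hne
  · have hc : ContinuousAt (Gex h w) w :=
      ((Gex_diff hUo hVo hUV hd hb w hz).differentiableAt (hVo.mem_nhds hw)).continuousAt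
    have ht : Tendsto (Gex h w) (𝓝[≠] w) (𝓝 (Gex h w w)) :=
      hc.continuousWithinAt.tendsto
    refine le_of_tendsto ht.norm ?_
    filter_upwards [self_mem_nhdsWithin,
      nhdsWithin_le_nhds (hVo.mem_nhds hw)] with ζ hζne hζV
    rw [Gex_of_ne hζne]
    exact hb _ ⟨hz, hζV, hζne⟩
  · rw [Gex_of_ne hne]; exact hb _ ⟨hz, hw, hne⟩

include hUo hVo hUV hd hb in
lemma Gex_contAt : ∀ a ∈ U, ContinuousAt (fun p : ℂ × ℂ => Gex h p.1 p.2) (a, a) := by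
  intro a ha
  obtain ⟨r, hr, hrU⟩ : ∃ r > 0, closedBall a (2*r) ⊆ U := by
    obtain ⟨ε, hε, hbs⟩ := Metric.isOpen_iff.1 hUo a ha
    exact ⟨ε/3, by positivity, fun x hx =>
      hbs (lt_of_le_of_lt (mem_closedBall.1 hx) (by linarith))⟩
  have hsubV : closedBall a (2*r) ⊆ V := fun x hx => hUV (hrU hx)
  rw [Metric.continuousAt_iff]
  intro ε hε
  -- uniform continuity on a compact set avoiding the diagonal
  set K := (closedBall a r) ×ˢ (sphere a (2*r)) with hK
  have hKc : IsCompact K := (isCompact_closedBall _ _).prod (isCompact_sphere _ _)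
  have hKD : K ⊆ Dp U V := by
    rintro ⟨z, ζ⟩ ⟨hz, hζ⟩
    refine ⟨hrU (closedBall_subset_closedBall (by linarith) hz),
      hUV (hrU (sphere_subset_closedBall hζ)), fun hzz => ?_⟩
    rw [mem_closedBall] at hz
    rw [mem_sphere] at hζ
    rw [hzz] at hζ
    linarith
  have hucont := hKc.uniformContinuousOn_of_continuous ((hd.continuousOn).mono hKD)
  rw [Metric.uniformContinuousOn_iff] at hucont
  obtain ⟨δ, hδ, hδ'⟩ := hucont (ε/2) (by positivity)
  have hca : ContinuousAt (Gex h a) a :=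
    ((Gex_diff hUo hVo hUV hd hb a ha).differentiableAt
      (hVo.mem_nhds (hUV ha))).continuousAt
  rw [Metric.continuousAt_iff] at hca
  obtain ⟨δ₂, hδ₂, hδ₂'⟩ := hca (ε/2) (by positivity)
  refine ⟨min (min δ δ₂) r, by positivity, ?_⟩
  rintro ⟨z, w⟩ hp
  rw [Prod.dist_eq, max_lt_iff] at hp
  obtain ⟨hpz, hpw⟩ := hp
  simp only at hpz hpw
  have hzr : z ∈ closedBall a r := by
    rw [mem_closedBall]
    exact le_of_lt (lt_of_lt_of_le hpz (min_le_right _ _))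
  have hzU : z ∈ U := hrU (closedBall_subset_closedBall (by linarith) hzr)
  have hwV : w ∈ closedBall a (2*r) := by
    rw [mem_closedBall]
    have h1 : dist w a < r := lt_of_lt_of_le hpw (min_le_right _ _)
    linarith
  -- max modulus bound for `Gex h z - Gex h a` on the big ball
  have hdiffφ : DifferentiableOn ℂ (fun x => Gex h z x - Gex h a x) (closedBall a (2*r)) :=
    ((Gex_diff hUo hVo hUV hd hb z hzU).mono hsubV).sub
      ((Gex_diff hUo hVo hUV hd hb a ha).mono hsubV)
  have hmax : ∀ x ∈ closedBall a (2*r), ‖Gex h z x - Gex h a x‖ ≤ ε/2 := by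
    refine maxBall (by linarith) hdiffφ ?_
    intro ζ hζ
    have hζz : ζ ≠ z := by
      intro hzz
      rw [mem_sphere] at hζ
      rw [hzz] at hζ
      rw [mem_closedBall] at hzr
      linarith
    have hζa : ζ ≠ a := by
      intro hzz
      rw [mem_sphere, hzz] at hζ
      simp at hζ
      linarith
    rw [Gex_of_ne hζz, Gex_of_ne hζa, ← dist_eq_norm]
    have h1 : (z, ζ) ∈ K := ⟨hzr, hζ⟩
    have h2 : (a, ζ) ∈ K := ⟨mem_closedBall_self hr.le, hζ⟩
    refine le_of_lt (hδ' _ h1 _ h2 ?_)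
    rw [Prod.dist_eq]
    simp only [dist_self]
    rw [max_lt_iff]
    constructor
    · exact lt_of_lt_of_le hpz (le_trans (min_le_left _ _) (min_le_left _ _))
    · exact hδ
  have h2nd : dist (Gex h a w) (Gex h a a) < ε/2 := by
    refine hδ₂' ?_
    exact lt_of_lt_of_le hpw (le_trans (min_le_left _ _) (min_le_right _ _))
  calc dist (Gex h z w) (Gex h a a)
      ≤ dist (Gex h z w) (Gex h a w) + dist (Gex h a w) (Gex h a a) := dist_triangle _ _ _
    _ < ε/2 + ε/2 := by
        refine add_lt_add_of_le_of_lt ?_ h2nd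
        rw [dist_eq_norm]
        exact hmax w hwV
    _ = ε := by ring

include hUo hVo hUV hd hb in
lemma Gex_diffAt : ∀ a ∈ U, DifferentiableAt ℂ (fun p : ℂ × ℂ => Gex h p.1 p.2) (a, a) := by
  intro a ha
  obtain ⟨r, hr, hrU⟩ : ∃ r > 0, closedBall a (2*r) ⊆ U := by
    obtain ⟨ε, hε, hbs⟩ := Metric.isOpen_iff.1 hUo a ha
    exact ⟨ε/3, by positivity, fun x hx =>
      hbs (lt_of_le_of_lt (mem_closedBall.1 hx) (by linarith))⟩
  have hsubV : closedBall a (2*r) ⊆ V := fun x hx => hUV (hrU hx)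
  have hballU : ball a (2*r) ⊆ U := fun x hx => hrU (ball_subset_closedBall hx)
  have hcbr : closedBall a r ⊆ ball a (2*r) := by
    intro x hx; rw [mem_closedBall] at hx; rw [mem_ball]; linarith
  have haU : ∀ z ∈ closedBall a r, z ∈ U := fun z hz => hballU (hcbr hz)
  have hC0 : 0 ≤ C := by
    have hmem : ((a, a + (r:ℂ)) : ℂ × ℂ) ∈ Dp U V := by
      refine ⟨ha, hUV (hrU ?_), ?_⟩
      · rw [mem_closedBall]
        simp only [Complex.dist_eq, add_sub_cancel_left]
        rw [Complex.norm_real, Real.norm_eq_abs]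
        rw [abs_of_pos hr]; linarith
      · simp only [ne_eq, add_eq_left, Complex.ofReal_eq_zero]
        exact_mod_cast hr.ne'
    exact le_trans (norm_nonneg _) (hb _ hmem)
  -- differentiability of the slices z ↦ Gex h z w
  have hH : ∀ w ∈ ball a (2*r), DifferentiableOn ℂ (fun z => Gex h z w) (ball a (2*r)) := by
    intro w hw
    refine (Complex.differentiableOn_compl_singleton_and_continuousAt_iff
      (c := w) (isOpen_ball.mem_nhds hw)).1 ⟨?_, ?_⟩
    · intro z hz
      have hzU : z ∈ U := hballU hz.1
      have hne : w ≠ z := Ne.symm hz.2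
      have hmem : (z, w) ∈ Dp U V := ⟨hzU, hUV (hballU hw), hne⟩
      have hdz : DifferentiableAt ℂ (fun z' => h (z', w)) z :=
        (hd.differentiableAt ((isOpen_Dp hUo hVo).mem_nhds hmem)).comp z
          (differentiableAt_id.prodMk (differentiableAt_const w))
      have hev : (fun z' => Gex h z' w) =ᶠ[𝓝 z] (fun z' => h (z', w)) := by
        filter_upwards [isOpen_ne.mem_nhds hz.2] with x hx
        exact Gex_of_ne (Ne.symm hx)
      exact (hdz.congr_of_eventuallyEq hev).differentiableWithinAt
    · have h1 : ContinuousAt (fun z : ℂ => ((z, w) : ℂ × ℂ)) w :=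
        (continuous_id.prodMk continuous_const).continuousAt
      exact ContinuousAt.comp (x := w) (g := fun p : ℂ × ℂ => Gex h p.1 p.2)
        (f := fun z : ℂ => ((z, w) : ℂ × ℂ)) (Gex_contAt hUo hVo hUV hd hb w (hballU hw)) h1
  have hbd2 := Gex_bound hUo hVo hUV hd hb
  have hHdiffAt : ∀ w ∈ ball a (2*r), ∀ x ∈ closedBall a r,
      DifferentiableAt ℂ (fun z => Gex h z w) x := fun w hw x hx =>
    (hH w hw).differentiableAt (isOpen_ball.mem_nhds (hcbr hx))
  set A := deriv (fun z => Gex h z a) a with hA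
  set B := deriv (Gex h a) a with hB
  have hBd : HasDerivAt (Gex h a) B a :=
    ((Gex_diff hUo hVo hUV hd hb a ha).differentiableAt
      (hVo.mem_nhds (hUV ha))).hasDerivAt
  -- Cauchy bound for the w-derivative of Gex h z
  have hderg : ∀ z ∈ closedBall a r, ∀ x ∈ closedBall a r, ‖deriv (Gex h z) x‖ ≤ C / r := by
    intro z hz x hx
    have hsub : closedBall x r ⊆ closedBall a (2*r) := by
      intro y hy
      rw [mem_closedBall] at *
      calc dist y a ≤ dist y x + dist x a := dist_triangle _ _ _
        _ ≤ 2*r := by linarith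
    refine cauchyBound hr ((Gex_diff hUo hVo hUV hd hb z (haU z hz)).mono
      (fun y hy => hsubV (hsub hy))) ?_
    intro y hy
    exact hbd2 z (haU z hz) y (hsubV (hsub hy))
  -- T2 ingredient : w-Lipschitz bound for Gex h z
  have hT2a : ∀ w ∈ closedBall a r, ∀ z ∈ closedBall a r,
      ‖Gex h z w - Gex h z a‖ ≤ C/r * ‖w - a‖ := by
    intro w hw z hz
    refine Convex.norm_image_sub_le_of_norm_deriv_le ?_
      (fun x hx => hderg z hz x hx) (convex_closedBall a r) (mem_closedBall_self hr.le) hw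
    intro x hx
    exact (Gex_diff hUo hVo hUV hd hb z (haU z hz)).differentiableAt
      (hVo.mem_nhds (hsubV (closedBall_subset_closedBall (by linarith) hx)))
  -- T2: the first partial derivative varies slowly
  have hT2 : ∀ w ∈ closedBall a r,
      ‖deriv (fun z => Gex h z w) a - A‖ ≤ C/(r*r) * ‖w - a‖ := by
    intro w hw
    have hwb : w ∈ ball a (2*r) := hcbr hw
    have hab : a ∈ ball a (2*r) := mem_ball_self (by linarith)
    have hsub : DifferentiableOn ℂ (fun z => Gex h z w - Gex h z a) (closedBall a r) :=
      fun x hx => ((hHdiffAt w hwb x hx).sub (hHdiffAt a hab x hx)).differentiableWithinAt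
    have hbnd : ∀ x ∈ closedBall a r, ‖Gex h x w - Gex h x a‖ ≤ C/r * ‖w - a‖ :=
      fun x hx => hT2a w hw x hx
    have hkey := cauchyBound hr hsub hbnd
    rw [deriv_fun_sub (hHdiffAt w hwb a (mem_closedBall_self hr.le))
      (hHdiffAt a hab a (mem_closedBall_self hr.le))] at hkey
    rw [hA]
    calc ‖deriv (fun z => Gex h z w) a - deriv (fun z => Gex h z a) a‖
        ≤ (C/r * ‖w - a‖) / r := hkey
      _ = C/(r*r) * ‖w - a‖ := by rw [div_mul_eq_mul_div, div_div, div_mul_eq_mul_div]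
  -- T1: uniform second order Taylor bound in z
  have hT1 : ∀ w ∈ closedBall a r, ∀ z ∈ closedBall a (r/2),
      ‖Gex h z w - Gex h a w - (z - a) * deriv (fun z => Gex h z w) a‖ ≤
        4*C/(r*r) * (‖z - a‖ * ‖z - a‖) := by
    intro w hw z hz
    have hwb : w ∈ ball a (2*r) := hcbr hw
    set f := fun z => Gex h z w with hf
    have hfd : DifferentiableOn ℂ f (ball a (2*r)) := hH w hwb
    set φ := dslope f a with hφ
    have hφd : DifferentiableOn ℂ φ (ball a (2*r)) :=
      (Complex.differentiableOn_dslope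
        (isOpen_ball.mem_nhds (mem_ball_self (by linarith)))).2 hfd
    have hφsphere : ∀ ζ ∈ sphere a r, ‖φ ζ‖ ≤ 2*C/r := by
      intro ζ hζ
      have hζr : dist ζ a = r := mem_sphere.1 hζ
      have hζa : ζ ≠ a := by
        intro e; rw [e] at hζr; simp at hζr; linarith
      have hζU : ζ ∈ U := haU ζ (sphere_subset_closedBall hζ)
      rw [hφ, dslope_of_ne _ hζa, slope_def_field, hf]
      rw [div_eq_inv_mul, norm_mul, norm_inv]
      have h1 : ‖Gex h ζ w - Gex h a w‖ ≤ 2*C := by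
        calc ‖Gex h ζ w - Gex h a w‖ ≤ ‖Gex h ζ w‖ + ‖Gex h a w‖ := norm_sub_le _ _
          _ ≤ C + C := add_le_add (hbd2 ζ hζU w (hsubV (ball_subset_closedBall hwb)))
              (hbd2 a ha w (hsubV (ball_subset_closedBall hwb)))
          _ = 2*C := by ring
      have h2 : ‖ζ - a‖ = r := by rw [← dist_eq_norm]; exact hζr
      rw [h2]
      rw [div_eq_inv_mul]
      exact mul_le_mul_of_nonneg_left h1 (by positivity)
    have hφball : ∀ x ∈ closedBall a r, ‖φ x‖ ≤ 2*C/r :=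
      maxBall hr (hφd.mono (fun y hy => hcbr hy)) hφsphere
    have hφderiv : ∀ x ∈ closedBall a (r/2), ‖deriv φ x‖ ≤ 2*C/r / (r/2) := by
      intro x hx
      have hsub : closedBall x (r/2) ⊆ closedBall a r := by
        intro y hy
        rw [mem_closedBall] at *
        calc dist y a ≤ dist y x + dist x a := dist_triangle _ _ _
          _ ≤ r := by linarith
      exact cauchyBound (by positivity) ((hφd.mono (fun y hy => hcbr hy)).mono hsub)
        (fun y hy => hφball y (hsub hy))
    have hlip : ‖φ z - φ a‖ ≤ (2*C/r / (r/2)) * ‖z - a‖ := by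
      refine Convex.norm_image_sub_le_of_norm_deriv_le ?_ hφderiv
        (convex_closedBall a (r/2)) (mem_closedBall_self (by positivity)) hz
      intro x hx
      exact hφd.differentiableAt (isOpen_ball.mem_nhds
        (hcbr (closedBall_subset_closedBall (by linarith) hx)))
    have hφa : φ a = deriv f a := dslope_same f a
    have hid : f z - f a - (z - a) * deriv f a = (z - a) * (φ z - φ a) := by
      rcases eq_or_ne z a with rfl | hza
      · simp
      · rw [hφ, dslope_of_ne _ hza, slope_def_field, dslope_same]
        have hza' : (z : ℂ) - a ≠ 0 := sub_ne_zero.2 hza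
        field_simp
    calc ‖Gex h z w - Gex h a w - (z - a) * deriv (fun z => Gex h z w) a‖
        = ‖(z - a) * (φ z - φ a)‖ := by rw [← hid]
      _ = ‖z - a‖ * ‖φ z - φ a‖ := norm_mul _ _
      _ ≤ ‖z - a‖ * ((2*C/r / (r/2)) * ‖z - a‖) :=
          mul_le_mul_of_nonneg_left hlip (norm_nonneg _)
      _ = (2*C/r/(r/2)) * (‖z - a‖ * ‖z - a‖) := by ring
      _ = 4*C/(r*r) * (‖z - a‖ * ‖z - a‖) := by
          congr 1
          field_simp
          ring
  -- assemble the total derivative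
  set L : ℂ × ℂ →L[ℂ] ℂ :=
    A • (ContinuousLinearMap.fst ℂ ℂ ℂ) + B • (ContinuousLinearMap.snd ℂ ℂ ℂ) with hL
  have hLp : ∀ p : ℂ × ℂ, L (p - (a,a)) = A * (p.1 - a) + B * (p.2 - a) := by
    intro p
    simp [hL, smul_eq_mul, Prod.fst_sub, Prod.snd_sub]
  have hmain : HasFDerivAt (fun p : ℂ × ℂ => Gex h p.1 p.2) L (a, a) := by
    rw [hasFDerivAt_iff_isLittleO]
    rw [Asymptotics.isLittleO_iff]
    intro ε hε
    set K1 : ℝ := 5*C/(r*r) + 1 with hK1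
    have hK1pos : 0 < K1 := by positivity
    have hBlo := hasDerivAt_iff_isLittleO.1 hBd
    rw [Asymptotics.isLittleO_iff] at hBlo
    have hBev := hBlo (show (0:ℝ) < ε/3 by positivity)
    have hfst : Filter.Tendsto (fun p : ℂ × ℂ => p.1) (𝓝 (a,a)) (𝓝 a) :=
      continuous_fst.continuousAt
    have hsnd : Filter.Tendsto (fun p : ℂ × ℂ => p.2) (𝓝 (a,a)) (𝓝 a) :=
      continuous_snd.continuousAt
    have E1 : ∀ᶠ p : ℂ × ℂ in 𝓝 (a,a), p.1 ∈ closedBall a (r/2) :=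
      hfst.eventually_mem (closedBall_mem_nhds a (by positivity))
    have E2 : ∀ᶠ p : ℂ × ℂ in 𝓝 (a,a), p.2 ∈ closedBall a r :=
      hsnd.eventually_mem (closedBall_mem_nhds a hr)
    have E3 : ∀ᶠ p : ℂ × ℂ in 𝓝 (a,a),
        ‖Gex h a p.2 - Gex h a a - (p.2 - a) • B‖ ≤ ε/3 * ‖p.2 - a‖ := hsnd.eventually hBev
    have E4 : ∀ᶠ p : ℂ × ℂ in 𝓝 (a,a), ‖p - (a,a)‖ ≤ ε/3/K1 := by
      filter_upwards [closedBall_mem_nhds ((a,a) : ℂ × ℂ) (show (0:ℝ) < ε/3/K1 by positivity)]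
        with p hp
      rw [← dist_eq_norm]; exact mem_closedBall.1 hp
    filter_upwards [E1, E2, E3, E4] with p h1 h2 h3 h4
    have hz1 : ‖p.1 - a‖ ≤ ‖p - (a,a)‖ := by
      have := norm_fst_le (p - ((a,a) : ℂ × ℂ))
      simpa using this
    have hw1 : ‖p.2 - a‖ ≤ ‖p - (a,a)‖ := by
      have := norm_snd_le (p - ((a,a) : ℂ × ℂ))
      simpa using this
    have goal_eq : (fun p : ℂ × ℂ => Gex h p.1 p.2) p
          - (fun p : ℂ × ℂ => Gex h p.1 p.2) (a,a) - L (p - (a,a)) =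
        (Gex h p.1 p.2 - Gex h a p.2 - (p.1 - a) * deriv (fun z => Gex h z p.2) a)
        + ((p.1 - a) * (deriv (fun z => Gex h z p.2) a - A))
        + (Gex h a p.2 - Gex h a a - (p.2 - a) * B) := by
      simp only []
      rw [hLp]
      ring
    rw [goal_eq]
    have b1 := hT1 p.2 h2 p.1 h1
    have b2' := hT2 p.2 h2
    have b3 : ‖Gex h a p.2 - Gex h a a - (p.2 - a) * B‖ ≤ ε/3 * ‖p.2 - a‖ := by
      rw [← smul_eq_mul]; exact h3
    set N := ‖p - ((a,a) : ℂ × ℂ)‖ with hN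
    have hN0 : 0 ≤ N := norm_nonneg _
    have hza0 : 0 ≤ ‖p.1 - a‖ := norm_nonneg _
    have hwa0 : 0 ≤ ‖p.2 - a‖ := norm_nonneg _
    have t1 : ‖Gex h p.1 p.2 - Gex h a p.2 - (p.1 - a) * deriv (fun z => Gex h z p.2) a‖
        ≤ 4*C/(r*r) * (N * N) := by
      refine le_trans b1 ?_
      have h5 : ‖p.1 - a‖ * ‖p.1 - a‖ ≤ N * N := mul_le_mul hz1 hz1 hza0 hN0
      have h4c : (0:ℝ) ≤ 4*C/(r*r) := by positivity
      exact mul_le_mul_of_nonneg_left h5 h4c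
    have t2 : ‖(p.1 - a) * (deriv (fun z => Gex h z p.2) a - A)‖ ≤ C/(r*r) * (N * N) := by
      rw [norm_mul]
      have hc : (0:ℝ) ≤ C/(r*r) := by positivity
      calc ‖p.1 - a‖ * ‖deriv (fun z => Gex h z p.2) a - A‖
          ≤ N * (C/(r*r) * ‖p.2 - a‖) := by
            refine mul_le_mul hz1 b2' (norm_nonneg _) hN0
        _ ≤ N * (C/(r*r) * N) := by
            refine mul_le_mul_of_nonneg_left (mul_le_mul_of_nonneg_left hw1 hc) hN0
        _ = C/(r*r) * (N * N) := by ring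
    have t3 : ‖Gex h a p.2 - Gex h a a - (p.2 - a) * B‖ ≤ ε/3 * N := by
      refine le_trans b3 (mul_le_mul_of_nonneg_left hw1 (by positivity))
    have hK1N : 5*C/(r*r) * (N * N) ≤ ε/3 * N := by
      have hle : 5*C/(r*r) ≤ K1 := by rw [hK1]; linarith
      have h5 : K1 * (ε/3/K1) = ε/3 := by field_simp
      calc 5*C/(r*r) * (N * N) ≤ K1 * (N * N) :=
            mul_le_mul_of_nonneg_right hle (by positivity)
        _ = K1 * N * N := by ring
        _ ≤ K1 * (ε/3/K1) * N := by
            refine mul_le_mul_of_nonneg_right (mul_le_mul_of_nonneg_left h4 hK1pos.le) hN0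
        _ = ε/3 * N := by rw [h5]
    calc ‖_ + _ + _‖ ≤ _ := norm_add₃_le
      _ ≤ 4*C/(r*r) * (N * N) + C/(r*r) * (N * N) + ε/3 * N := by
          exact add_le_add (add_le_add t1 t2) t3
      _ = 5*C/(r*r) * (N * N) + ε/3 * N := by ring
      _ ≤ ε/3 * N + ε/3 * N := by linarith
      _ ≤ ε * N := by
          have : ε/3 * N + ε/3 * N = 2/3 * ε * N := by ring
          rw [this]
          refine mul_le_mul_of_nonneg_right ?_ hN0
          linarith
  exact hmain.differentiableAt

include hUo hVo hUV hd hb in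
lemma ext_across_diag : ∃ g : ℂ × ℂ → ℂ, DifferentiableOn ℂ g (U ×ˢ V) ∧
    EqOn g h (Dp U V) ∧ ∀ p ∈ U ×ˢ V, ‖g p‖ ≤ C := by
  refine ⟨fun p => Gex h p.1 p.2, ?_, ?_, ?_⟩
  · rintro ⟨z, w⟩ ⟨hz, hw⟩
    rcases eq_or_ne w z with rfl | hne
    · exact (Gex_diffAt hUo hVo hUV hd hb w hz).differentiableWithinAt
    · have hmem : ((z, w) : ℂ × ℂ) ∈ Dp U V := ⟨hz, hw, hne⟩
      have hev : (fun p : ℂ × ℂ => Gex h p.1 p.2) =ᶠ[𝓝 ((z, w) : ℂ × ℂ)] h := by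
        filter_upwards [(isOpen_Dp hUo hVo).mem_nhds hmem] with q hq
        exact Gex_of_ne hq.2.2
      exact ((hd.differentiableAt ((isOpen_Dp hUo hVo).mem_nhds hmem)).congr_of_eventuallyEq
        hev).differentiableWithinAt
  · intro p hp
    exact Gex_of_ne hp.2.2
  · rintro ⟨z, w⟩ ⟨hz, hw⟩
    exact Gex_bound hUo hVo hUV hd hb z hz w hw

end EXT



lemma norm_lt_iff_normSq {z : ℂ} {c : ℝ} (hc : 0 < c) :
    ‖z‖ < c ↔ Complex.normSq z < c^2 := by
  have h1 : Complex.normSq z = ‖z‖^2 := (Complex.sq_norm z).symm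
  have h2 : (0:ℝ) ≤ ‖z‖ := norm_nonneg _
  constructor
  · intro h; nlinarith
  · intro h; nlinarith

lemma norm_gt_iff_normSq {z : ℂ} {c : ℝ} (hc : 0 ≤ c) :
    c < ‖z‖ ↔ c^2 < Complex.normSq z := by
  have h1 : Complex.normSq z = ‖z‖^2 := (Complex.sq_norm z).symm
  have h2 : (0:ℝ) ≤ ‖z‖ := norm_nonneg _
  constructor
  · intro h; nlinarith
  · intro h; nlinarith

lemma mem_Qset_iff {z : ℂ} : z ∈ Qset ↔ Complex.normSq z < 1 ∧ z.re < Complex.normSq z := by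
  unfold Qset
  rw [mem_setOf_eq, norm_lt_iff_normSq one_pos, norm_gt_iff_normSq (by norm_num : (0:ℝ) ≤ 1/2)]
  constructor
  · rintro ⟨h1, h2⟩
    refine ⟨by simpa using h1, ?_⟩
    have := Complex.normSq_apply (z - 1/2)
    simp only [Complex.sub_re, Complex.sub_im, Complex.div_re, Complex.div_im,
      Complex.one_re, Complex.one_im] at this
    rw [Complex.normSq_apply] at *
    simp only [Complex.sub_re, Complex.sub_im] at h2
    have hre : (1/2 : ℂ).re = 1/2 := by norm_num
    have him : (1/2 : ℂ).im = 0 := by norm_num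
    rw [hre, him] at h2
    nlinarith
  · rintro ⟨h1, h2⟩
    refine ⟨by simpa using h1, ?_⟩
    rw [Complex.normSq_apply] at *
    simp only [Complex.sub_re, Complex.sub_im]
    have hre : (1/2 : ℂ).re = 1/2 := by norm_num
    have him : (1/2 : ℂ).im = 0 := by norm_num
    rw [hre, him]
    nlinarith

lemma qset_preconnected : IsPreconnected Qset := by
  set S : Set ℂ := {w : ℂ | 1/2 < w.re ∧ w.re < 1} with hS
  have hconv : Convex ℝ S := (convex_halfSpace_re_gt (1/2)).inter (convex_halfSpace_re_lt 1)
  have hne : ∀ w ∈ S, w ≠ 0 := by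
    intro w hw h0
    rw [h0] at hw
    simp [hS] at hw
    linarith
  have hcont : ContinuousOn (fun w : ℂ => 1 - w⁻¹) S :=
    continuousOn_const.sub (continuousOn_id.inv₀ hne)
  have himg : Qset = (fun w : ℂ => 1 - w⁻¹) '' S := by
    ext z
    constructor
    · intro hz
      rw [mem_Qset_iff] at hz
      have hz1 : (1:ℂ) - z ≠ 0 := by
        intro h0
        have : z = 1 := by linear_combination -h0
        rw [this] at hz
        simp at hz
      have hnsq : Complex.normSq (1 - z) > 0 := Complex.normSq_pos.2 hz1
      have hre : ((1 - z)⁻¹).re = (1 - z.re) / Complex.normSq (1 - z) := by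
        rw [Complex.inv_re, Complex.sub_re, Complex.one_re]
      have hnsq_eq : Complex.normSq (1 - z) = 1 - 2*z.re + Complex.normSq z := by
        rw [Complex.normSq_apply, Complex.normSq_apply]
        simp [Complex.sub_re, Complex.sub_im]
        try ring
      refine ⟨(1 - z)⁻¹, ⟨?_, ?_⟩, ?_⟩
      · rw [hre, lt_div_iff₀ hnsq, hnsq_eq]
        linarith [hz.1]
      · rw [hre, div_lt_one hnsq, hnsq_eq]
        linarith [hz.2]
      · simp only
        rw [inv_inv]
        ring
    · rintro ⟨w, hw, rfl⟩
      rw [mem_Qset_iff]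
      have hw0 : w ≠ 0 := hne w hw
      have hnsq : Complex.normSq w > 0 := Complex.normSq_pos.2 hw0
      obtain ⟨hw1, hw2⟩ := hw
      have hre : ((1:ℂ) - w⁻¹).re = 1 - w.re / Complex.normSq w := by
        simp [Complex.sub_re, Complex.inv_re]
      have hnsq2 : Complex.normSq (1 - w⁻¹) =
          (Complex.normSq w - 2*w.re + 1) / Complex.normSq w := by
        have hq : (1 : ℂ) - w⁻¹ = (w - 1) / w := by field_simp
        rw [hq, Complex.normSq_div]
        congr 1
        rw [Complex.normSq_apply, Complex.normSq_apply]
        simp [Complex.sub_re, Complex.sub_im]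
        try ring
      constructor
      · rw [hnsq2, div_lt_one hnsq]
        linarith
      · rw [hre, hnsq2, lt_div_iff₀ hnsq]
        have hkey : (1 - w.re / Complex.normSq w) * Complex.normSq w =
            Complex.normSq w - w.re := by field_simp
        rw [hkey]
        linarith
  rw [himg]
  exact hconv.isPreconnected.image _ hcont


lemma unitDisc_open : IsOpen unitDisc := by
  have : unitDisc = ball (0:ℂ) 1 := by
    ext z; simp [unitDisc, mem_ball, Complex.dist_eq]
  rw [this]; exact isOpen_ball

lemma qset_open : IsOpen Qset := by
  have h1 : IsOpen {z : ℂ | ‖z‖ < 1} :=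
    isOpen_lt (continuous_norm) continuous_const
  have h2 : IsOpen {z : ℂ | 1/2 < ‖z - 1/2‖} :=
    isOpen_lt continuous_const ((continuous_id.sub continuous_const).norm)
  exact h1.inter h2

lemma qset_sub_disc : Qset ⊆ unitDisc := fun z hz => hz.1

lemma dset_eq : Dset = Dp Qset unitDisc := rfl

lemma dset_sub : Dset ⊆ Qset ×ˢ unitDisc := fun p hp => ⟨hp.1, hp.2.1⟩

lemma omega_preconnected : IsPreconnected (Qset ×ˢ unitDisc) := by
  refine qset_preconnected.prod (Convex.isPreconnected ?_)
  have : unitDisc = ball (0:ℂ) 1 := by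
    ext z; simp [unitDisc, mem_ball, Complex.dist_eq]
  rw [this]; exact convex_ball 0 1

lemma omega_open : IsOpen (Qset ×ˢ unitDisc) := qset_open.prod unitDisc_open

lemma dense_dset : Qset ×ˢ unitDisc ⊆ closure Dset := by
  rintro ⟨z, w⟩ ⟨hz, hw⟩
  rcases eq_or_ne w z with rfl | hne
  · have htend : Filter.Tendsto (fun x : ℂ => ((w, x) : ℂ × ℂ)) (𝓝[≠] w) (𝓝 (w, w)) :=
      ((continuous_const.prodMk continuous_id).tendsto w).mono_left nhdsWithin_le_nhds
    refine mem_closure_of_tendsto htend ?_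
    filter_upwards [self_mem_nhdsWithin,
      nhdsWithin_le_nhds (unitDisc_open.mem_nhds (qset_sub_disc hz))] with x hx1 hx2
    exact ⟨hz, hx2, hx1⟩
  · exact subset_closure ⟨hz, hw, hne⟩

lemma eqOn_of_dense {X : Type*} [TopologicalSpace X] [T2Space X] {f g : ℂ × ℂ → X}
    (hf : ContinuousOn f (Qset ×ˢ unitDisc)) (hg : ContinuousOn g (Qset ×ˢ unitDisc))
    (heq : EqOn f g Dset) : EqOn f g (Qset ×ˢ unitDisc) := by
  intro p hp
  rcases (em (p ∈ Dset)) with hd | hd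
  · exact heq hd
  · have hcl : p ∈ closure Dset := dense_dset hp
    have hne : (𝓝[Dset] p).NeBot := mem_closure_iff_nhdsWithin_neBot.1 hcl
    have hfc : Filter.Tendsto f (𝓝[Dset] p) (𝓝 (f p)) :=
      ((hf p hp).mono dset_sub).tendsto
    have hgc : Filter.Tendsto g (𝓝[Dset] p) (𝓝 (g p)) :=
      ((hg p hp).mono dset_sub).tendsto
    have : Filter.Tendsto f (𝓝[Dset] p) (𝓝 (g p)) := by
      refine hgc.congr' ?_
      filter_upwards [self_mem_nhdsWithin] with q hq
      exact (heq hq).symm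
    exact tendsto_nhds_unique hfc this

lemma sample_a : ((-1/2 : ℂ), (-1/4 : ℂ)) ∈ Dset := by
  refine ⟨?_, ?_, ?_⟩
  · rw [mem_Qset_iff]
    constructor <;> · simp [Complex.normSq_apply]; norm_num
  · rw [norm_lt_iff_normSq one_pos]
    simp [Complex.normSq_apply]; norm_num
  · intro h; norm_num at h

lemma sample_b : ((-1/3 : ℂ), (-1/6 : ℂ)) ∈ Dset := by
  refine ⟨?_, ?_, ?_⟩
  · rw [mem_Qset_iff]
    constructor <;> · simp [Complex.normSq_apply]; norm_num
  · rw [norm_lt_iff_normSq one_pos]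
    simp [Complex.normSq_apply]; norm_num
  · intro h
    have := congrArg Complex.re h
    simp at this
    norm_num at this

lemma goodext (F : ℂ × ℂ → ℂ × ℂ) (hdF : DifferentiableOn ℂ F Dset)
    (hbij : BijOn F Dset Dset) :
    ∃ Fh : ℂ × ℂ → ℂ × ℂ, DifferentiableOn ℂ Fh (Qset ×ˢ unitDisc) ∧
      EqOn Fh F Dset ∧ MapsTo Fh (Qset ×ˢ unitDisc) (Qset ×ˢ unitDisc) := by
  have hmaps : MapsTo F Dset Dset := hbij.mapsTo
  -- the three bounded component functions
  have hd1 : DifferentiableOn ℂ (fun p => (F p).1) Dset :=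
    (ContinuousLinearMap.fst ℂ ℂ ℂ).differentiable.comp_differentiableOn hdF
  have hd2 : DifferentiableOn ℂ (fun p => (F p).2) Dset :=
    (ContinuousLinearMap.snd ℂ ℂ ℂ).differentiable.comp_differentiableOn hdF
  have hne3 : ∀ p ∈ Dset, (F p).1 - 1/2 ≠ 0 := by
    intro p hp h0
    have := (hmaps hp).1.2
    rw [h0] at this
    simp at this
    linarith
  have hd3 : DifferentiableOn ℂ (fun p => ((F p).1 - 1/2)⁻¹) Dset :=
    (hd1.sub (differentiableOn_const _)).inv hne3
  have hb1 : ∀ p ∈ Dp Qset unitDisc, ‖(F p).1‖ ≤ 1 := fun p hp => ((hmaps hp).1.1).le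
  have hb2 : ∀ p ∈ Dp Qset unitDisc, ‖(F p).2‖ ≤ 1 := fun p hp => ((hmaps hp).2.1).le
  have hb3 : ∀ p ∈ Dp Qset unitDisc, ‖((F p).1 - 1/2)⁻¹‖ ≤ 2 := by
    intro p hp
    have h1 : (1:ℝ)/2 < ‖(F p).1 - 1/2‖ := (hmaps hp).1.2
    rw [norm_inv]
    have h2 : ((1:ℝ)/2)⁻¹ = 2 := by norm_num
    rw [← h2]
    exact inv_anti₀ (by norm_num) h1.le
  obtain ⟨g1, hg1d, hg1e, hg1b⟩ :=
    ext_across_diag qset_open unitDisc_open qset_sub_disc hd1 hb1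
  obtain ⟨g2, hg2d, hg2e, hg2b⟩ :=
    ext_across_diag qset_open unitDisc_open qset_sub_disc hd2 hb2
  obtain ⟨g3, hg3d, hg3e, hg3b⟩ :=
    ext_across_diag qset_open unitDisc_open qset_sub_disc hd3 hb3
  set Fh : ℂ × ℂ → ℂ × ℂ := fun p => (g1 p, g2 p) with hFh
  have hFhd : DifferentiableOn ℂ Fh (Qset ×ˢ unitDisc) := hg1d.prodMk hg2d
  have hFhe : EqOn Fh F Dset := fun p hp => Prod.ext (hg1e hp) (hg2e hp)
  have hid3 : EqOn (fun p => g3 p * (g1 p - 1/2)) (fun _ => (1:ℂ)) (Qset ×ˢ unitDisc) := by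
    refine eqOn_of_dense
      (hg3d.continuousOn.mul ((hg1d.continuousOn).sub continuousOn_const))
      continuousOn_const ?_
    intro p hp
    simp only
    rw [hg3e hp, hg1e hp]
    exact inv_mul_cancel₀ (hne3 p hp)
  refine ⟨Fh, hFhd, hFhe, ?_⟩
  intro p hp
  -- Fh p lands in the closure of Dset
  have hclos : Fh p ∈ closure Dset := by
    have h1 : ContinuousWithinAt Fh Dset p := ((hFhd.continuousOn) p hp).mono dset_sub
    have h2 := h1.mem_closure_image (dense_dset hp)
    have himg : Fh '' Dset ⊆ Dset := by
      rintro q ⟨x, hx, rfl⟩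
      rw [hFhe hx]
      exact hmaps hx
    exact closure_mono himg h2
  have hKclosed : IsClosed {q : ℂ × ℂ | ‖q.1‖ ≤ 1 ∧ 1/2 ≤ ‖q.1 - 1/2‖ ∧ ‖q.2‖ ≤ 1} := by
    have e : {q : ℂ × ℂ | ‖q.1‖ ≤ 1 ∧ 1/2 ≤ ‖q.1 - 1/2‖ ∧ ‖q.2‖ ≤ 1} =
        {q : ℂ × ℂ | ‖q.1‖ ≤ 1} ∩ ({q : ℂ × ℂ | 1/2 ≤ ‖q.1 - 1/2‖} ∩
          {q : ℂ × ℂ | ‖q.2‖ ≤ 1}) := by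
      ext q; simp [and_assoc]
    rw [e]
    exact (isClosed_le (continuous_norm.comp continuous_fst) continuous_const).inter
      ((isClosed_le continuous_const ((continuous_fst.sub continuous_const).norm)).inter
        (isClosed_le (continuous_norm.comp continuous_snd) continuous_const))
  have hDK : Dset ⊆ {q : ℂ × ℂ | ‖q.1‖ ≤ 1 ∧ 1/2 ≤ ‖q.1 - 1/2‖ ∧ ‖q.2‖ ≤ 1} :=
    fun q hq => ⟨hq.1.1.le, hq.1.2.le, hq.2.1.le⟩
  have hmem := (hKclosed.closure_subset_iff.2 hDK) hclos
  obtain ⟨hle1, hle2, hle3⟩ := hmem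
  -- exclude the three boundary equalities
  have hne1 : ‖(Fh p).1‖ ≠ 1 := by
    intro heq1
    have hmax : IsMaxOn (norm ∘ g1) (Qset ×ˢ unitDisc) p := by
      intro q hq
      have : ‖g1 q‖ ≤ 1 := hg1b q hq
      simpa [heq1.symm] using this
    have hconst := Complex.eqOn_of_isPreconnected_of_isMaxOn_norm
      omega_preconnected omega_open hg1d hp hmax
    have h5 := hconst (dset_sub sample_a)
    have h6 : ‖(F ((-1/2 : ℂ), (-1/4 : ℂ))).1‖ < 1 := (hmaps sample_a).1.1
    have hg1a : g1 ((-1/2 : ℂ), (-1/4 : ℂ)) = (F ((-1/2 : ℂ), (-1/4 : ℂ))).1 := hg1e sample_a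
    rw [← hg1a, h5] at h6
    simp only [const] at h6
    rw [show (Fh p).1 = g1 p from rfl] at heq1
    rw [heq1] at h6
    linarith
  have hne2 : ‖(Fh p).2‖ ≠ 1 := by
    intro heq2
    have hmax : IsMaxOn (norm ∘ g2) (Qset ×ˢ unitDisc) p := by
      intro q hq
      have : ‖g2 q‖ ≤ 1 := hg2b q hq
      simpa [heq2.symm] using this
    have hconst := Complex.eqOn_of_isPreconnected_of_isMaxOn_norm
      omega_preconnected omega_open hg2d hp hmax
    have h5 := hconst (dset_sub sample_a)
    have h6 : ‖(F ((-1/2 : ℂ), (-1/4 : ℂ))).2‖ < 1 := (hmaps sample_a).2.1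
    have hg2a : g2 ((-1/2 : ℂ), (-1/4 : ℂ)) = (F ((-1/2 : ℂ), (-1/4 : ℂ))).2 := hg2e sample_a
    rw [← hg2a, h5] at h6
    simp only [const] at h6
    rw [show (Fh p).2 = g2 p from rfl] at heq2
    rw [heq2] at h6
    linarith
  have hne3' : ‖(Fh p).1 - 1/2‖ ≠ 1/2 := by
    intro heq3
    have hval : g3 p * (g1 p - 1/2) = 1 := hid3 hp
    have hg3norm : ‖g3 p‖ = 2 := by
      have hmn : ‖g3 p‖ * ‖g1 p - 1/2‖ = 1 := by rw [← norm_mul, hval, norm_one]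
      rw [show (Fh p).1 = g1 p from rfl] at heq3
      rw [heq3] at hmn
      linarith
    have hmax : IsMaxOn (norm ∘ g3) (Qset ×ˢ unitDisc) p := by
      intro q hq
      have : ‖g3 q‖ ≤ 2 := hg3b q hq
      simpa [hg3norm.symm] using this
    have hconst := Complex.eqOn_of_isPreconnected_of_isMaxOn_norm
      omega_preconnected omega_open hg3d hp hmax
    have hval2 : ∀ q ∈ Dset, (F q).1 = 1/2 + (g3 p)⁻¹ := by
      intro q hq
      have h7 := hconst (dset_sub hq)
      simp only [const] at h7
      have hg3q : g3 q = ((F q).1 - 1/2)⁻¹ := hg3e hq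
      have h8 : ((F q).1 - 1/2)⁻¹ = g3 p := by rw [← hg3q]; exact h7
      have h9 : (F q).1 - 1/2 = (g3 p)⁻¹ := by rw [← h8, inv_inv]
      linear_combination h9
    obtain ⟨x, hx, hFx⟩ := hbij.surjOn sample_a
    obtain ⟨y, hy, hFy⟩ := hbij.surjOn sample_b
    have e1 := hval2 x hx
    rw [hFx] at e1
    have e2 := hval2 y hy
    rw [hFy] at e2
    simp only at e1 e2
    have : (-1/2 : ℂ) = -1/3 := by rw [e1, ← e2]
    norm_num at this
  exact ⟨⟨lt_of_le_of_ne hle1 hne1, lt_of_le_of_ne hle2 (Ne.symm hne3')⟩,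
    lt_of_le_of_ne hle3 hne2⟩


end Aux

/-- Every holomorphic automorphism `F` of
`D = {(z,w) : z ∈ Q, w ∈ Δ, w ≠ z}` extends to a holomorphic automorphism of `Q × Δ`. -/
theorem stmt11 (F : ℂ × ℂ → ℂ × ℂ) (hF : IsBiholOn Dset F) :
    ∃ Fhat : ℂ × ℂ → ℂ × ℂ, IsBiholOn (Qset ×ˢ unitDisc) Fhat ∧
      ∀ p ∈ Dset, Fhat p = F p := by
  obtain ⟨hdF, hbij, g, hdg, hinv⟩ := hF
  have hgbij : BijOn g Dset Dset := BijOn.symm hinv.symm hbij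
  obtain ⟨Fh, hFhd, hFhe, hFhm⟩ := goodext F hdF hbij
  obtain ⟨Gh, hGhd, hGhe, hGhm⟩ := goodext g hdg hgbij
  have hleft : EqOn (fun p => Gh (Fh p)) id (Qset ×ˢ unitDisc) := by
    refine eqOn_of_dense (hGhd.continuousOn.comp (hFhd.continuousOn) hFhm)
      continuousOn_id ?_
    intro p hp
    simp only [id]
    rw [hFhe hp, hGhe (hbij.mapsTo hp)]
    exact hinv.1 hp
  have hright : EqOn (fun p => Fh (Gh p)) id (Qset ×ˢ unitDisc) := by
    refine eqOn_of_dense (hFhd.continuousOn.comp (hGhd.continuousOn) hGhm)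
      continuousOn_id ?_
    intro p hp
    simp only [id]
    rw [hGhe hp, hFhe (hgbij.mapsTo hp)]
    exact hinv.2 hp
  refine ⟨Fh, ⟨hFhd, ?_, Gh, hGhd, ?_, ?_⟩, fun p hp => hFhe hp⟩
  · exact InvOn.bijOn ⟨fun p hp => hleft hp, fun p hp => hright hp⟩ hFhm hGhm
  · exact fun p hp => hleft hp
  · exact fun p hp => hright hp
end
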